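/- arXiv:1512.09278 — 8 statements merged into one kernel-verified Lean document; each statement's English description precedes it below -/
import Mathlib

section
/- For all nonnegative integers A, B and every complex number u ≠ 1, the contour integral f_{A,B}(u) satisfies the symmetry relation f_{A,B}(u) = f_{B,A}(u) + (A − B). -/
/-- `f A B u` is the contour integral
`(1/(2πi)) ∮_{|z|=r} (1 + 1/(u+z−1))^A (1 − 1/z)^B dz`
over a circle of radius `0 < r < |1−u|` centered at `0` (here `r = |1−u|/2`);
the value is independent of the choice of such `r`. -/
noncomputable def f (A B : ℕ) (u : ℂ) : ℂ :=
  (2 * Real.pi * Complex.I)⁻¹ *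
    (∮ z in C(0, ‖1 - u‖ / 2), (1 + (u + z - 1)⁻¹) ^ A * (1 - z⁻¹) ^ B)

open Complex Metric Finset
open scoped Real

noncomputable section AuxFProof

namespace AuxFProof

/-- The basic integral `∮ (z-a)⁻ᵏ z⁻ʲ`. -/
def G (a : ℂ) (ρ : ℝ) (k j : ℕ) : ℂ :=
  ∮ z in C(0, ρ), ((z - a)⁻¹) ^ k * (z⁻¹) ^ j

variable {a : ℂ} {ρ : ℝ}

lemma sphere_ne_zero (hρ : 0 < ρ) {z : ℂ} (hz : z ∈ sphere (0:ℂ) ρ) : z ≠ 0 := by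
  intro h
  rw [mem_sphere_iff_norm, h, sub_zero, norm_zero] at hz
  exact hρ.ne hz

lemma sphere_ne_a (ha : ρ < ‖a‖) {z : ℂ} (hz : z ∈ sphere (0:ℂ) ρ) : z ≠ a := by
  intro h
  rw [mem_sphere_iff_norm, sub_zero, h] at hz
  exact (lt_irrefl _ (hz ▸ ha)).elim

lemma contOn (hρ : 0 < ρ) (ha : ρ < ‖a‖) (k j : ℕ) :
    ContinuousOn (fun z : ℂ => ((z - a)⁻¹) ^ k * (z⁻¹) ^ j) (sphere (0:ℂ) ρ) := by
  apply ContinuousOn.mul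
  · exact (((continuousOn_id.sub continuousOn_const).inv₀
      (fun z hz => sub_ne_zero.2 (sphere_ne_a ha hz))).pow k)
  · exact ((continuousOn_id.inv₀ (fun z hz => sphere_ne_zero hρ hz)).pow j)

lemma integrable (hρ : 0 < ρ) (ha : ρ < ‖a‖) (k j : ℕ) :
    CircleIntegrable (fun z : ℂ => ((z - a)⁻¹) ^ k * (z⁻¹) ^ j) 0 ρ :=
  (contOn hρ ha k j).circleIntegrable hρ.le

lemma G_k0 (hρ : 0 < ρ) (ha : ρ < ‖a‖) (k : ℕ) : G a ρ k 0 = 0 := by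
  have hne : ∀ z ∈ closedBall (0:ℂ) ρ, z ≠ a := by
    intro z hz h
    rw [mem_closedBall_iff_norm, sub_zero, h] at hz
    exact absurd (lt_of_lt_of_le ha hz) (lt_irrefl _)
  have hdiff : ∀ z ∈ closedBall (0:ℂ) ρ, DifferentiableAt ℂ (fun z : ℂ => ((z - a)⁻¹) ^ k) z :=
    fun z hz => (((differentiableAt_id.sub_const a).inv (sub_ne_zero.2 (hne z hz))).pow k)
  have : (∮ z in C(0, ρ), ((z - a)⁻¹) ^ k) = 0 := by
    apply Complex.circleIntegral_eq_zero_of_differentiable_on_off_countable hρ.le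
      Set.countable_empty
    · exact fun z hz => (hdiff z hz).continuousAt.continuousWithinAt
    · exact fun z hz => hdiff z (ball_subset_closedBall hz.1)
  have h2 : (fun z : ℂ => ((z - a)⁻¹) ^ k * (z⁻¹) ^ 0) = fun z : ℂ => ((z - a)⁻¹) ^ k := by
    funext z; simp
  rw [G, h2, this]

lemma G_0j (hρ : 0 < ρ) (ha : ρ < ‖a‖) (j : ℕ) :
    G a ρ 0 j = if j = 1 then (2 * Real.pi * I : ℂ) else 0 := by
  match j with
  | 0 =>
    rw [if_neg (by omega), G_k0 hρ ha 0]
  | 1 =>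
    simp only [G, pow_zero, one_mul, pow_one, if_pos rfl]
    have : (fun z : ℂ => z⁻¹) = fun z : ℂ => (z - 0)⁻¹ := by funext z; rw [sub_zero]
    rw [this]
    exact circleIntegral.integral_sub_center_inv 0 hρ.ne'
  | (n+2) =>
    simp only [G, pow_zero, one_mul]
    have : (fun z : ℂ => (z⁻¹) ^ (n+2)) = fun z : ℂ => (z - 0) ^ (-(n+2:ℕ) : ℤ) := by
      funext z
      rw [sub_zero, zpow_neg, zpow_natCast, inv_pow]
    rw [this, circleIntegral.integral_sub_zpow_of_ne (by omega) 0 0 ρ]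
    simp

lemma G_rec (hρ : 0 < ρ) (ha : ρ < ‖a‖) (k j : ℕ) :
    G a ρ (k+1) (j+1) = a⁻¹ * (G a ρ (k+1) j - G a ρ k (j+1)) := by
  have ha0 : a ≠ 0 := by
    intro h; rw [h] at ha; simp at ha; exact absurd (hρ.trans ha) (lt_irrefl _)
  have key : Set.EqOn (fun z : ℂ => ((z - a)⁻¹) ^ (k+1) * (z⁻¹) ^ (j+1))
      (fun z : ℂ => a⁻¹ * (((z - a)⁻¹) ^ (k+1) * (z⁻¹) ^ j - ((z - a)⁻¹) ^ k * (z⁻¹) ^ (j+1)))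
      (sphere (0:ℂ) ρ) := by
    intro z hz
    have hz0 : z ≠ 0 := sphere_ne_zero hρ hz
    have hza : z - a ≠ 0 := sub_ne_zero.2 (sphere_ne_a ha hz)
    have h : (z - a)⁻¹ * z⁻¹ = a⁻¹ * ((z - a)⁻¹ - z⁻¹) := by
      field_simp
      ring
    show ((z - a)⁻¹) ^ (k+1) * (z⁻¹) ^ (j+1)
        = a⁻¹ * (((z - a)⁻¹) ^ (k+1) * (z⁻¹) ^ j - ((z - a)⁻¹) ^ k * (z⁻¹) ^ (j+1))
    rw [show ((z - a)⁻¹) ^ (k+1) * (z⁻¹) ^ (j+1)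
        = (((z - a)⁻¹) ^ k * (z⁻¹) ^ j) * ((z - a)⁻¹ * z⁻¹) from by ring, h]
    ring
  rw [G, circleIntegral.integral_congr hρ.le key, circleIntegral.integral_const_mul,
    circleIntegral.integral_sub (integrable hρ ha (k+1) j) (integrable hρ ha k (j+1))]
  rw [G, G]

/-- The antisymmetrized quantity. -/
def D (a : ℂ) (ρ : ℝ) (k j : ℕ) : ℂ :=
  (-1:ℂ) ^ j * G a ρ k j - (-1:ℂ) ^ k * G a ρ j k

def E (k j : ℕ) : ℂ :=
  if k = 1 ∧ j = 0 then (2 * Real.pi * I : ℂ)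
  else if k = 0 ∧ j = 1 then -(2 * Real.pi * I : ℂ) else 0

lemma D_j0 (hρ : 0 < ρ) (ha : ρ < ‖a‖) (k : ℕ) : D a ρ k 0 = E k 0 := by
  rw [D, G_k0 hρ ha, G_0j hρ ha, E]
  rcases eq_or_ne k 1 with rfl | hk
  · norm_num
  · simp [hk]

lemma D_0j (hρ : 0 < ρ) (ha : ρ < ‖a‖) (j : ℕ) : D a ρ 0 j = E 0 j := by
  rw [D, G_k0 hρ ha, G_0j hρ ha, E]
  rcases eq_or_ne j 1 with rfl | hj
  · norm_num
  · simp [hj]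

lemma D_rec (hρ : 0 < ρ) (ha : ρ < ‖a‖) (k j : ℕ) :
    D a ρ (k+1) (j+1) = -a⁻¹ * (D a ρ (k+1) j + D a ρ k (j+1)) := by
  rw [D, G_rec hρ ha k j, G_rec hρ ha j k, D, D]
  ring

lemma D_val (hρ : 0 < ρ) (ha : ρ < ‖a‖) :
    ∀ n k j, k + j ≤ n → D a ρ k j = E k j := by
  intro n
  induction n with
  | zero =>
    intro k j h
    have hk : k = 0 := by omega
    have hj : j = 0 := by omega
    subst hk; subst hj
    exact D_j0 hρ ha 0
  | succ n ih =>
    intro k j h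
    match k, j with
    | k, 0 => exact D_j0 hρ ha k
    | 0, j+1 => exact D_0j hρ ha (j+1)
    | k+1, j+1 =>
      rw [D_rec hρ ha, ih (k+1) j (by omega), ih k (j+1) (by omega)]
      rcases Nat.eq_zero_or_pos k with rfl | hk
      · rcases Nat.eq_zero_or_pos j with rfl | hj
        · -- k = 0, j = 0 : E 1 0 + E 0 1 = 0, and E 1 1 = 0
          simp [E]
        · have hj1 : j + 1 ≠ 1 := by omega
          simp [E, hj1, hj.ne']
      · have hk1 : k + 1 ≠ 1 := by omega
        have hk0 : k ≠ 0 := by omega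
        simp [E, hk0, hk1]

lemma circleIntegral_finset_sum {ι : Type*} (s : Finset ι) (F : ι → ℂ → ℂ) (c : ℂ) (R : ℝ)
    (h : ∀ i ∈ s, CircleIntegrable (F i) c R) :
    (∮ z in C(c, R), ∑ i ∈ s, F i z) = ∑ i ∈ s, ∮ z in C(c, R), F i z := by
  simp only [circleIntegral, smul_sum]
  exact intervalIntegral.integral_finset_sum (fun i hi => (h i hi).out)

lemma expand (A B : ℕ) (w v : ℂ) :
    (1 + w) ^ A * (1 - v) ^ B
      = ∑ k ∈ range (A+1), ∑ j ∈ range (B+1),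
          ((A.choose k : ℂ) * (B.choose j) * (-1) ^ j) * (w ^ k * v ^ j) := by
  rw [add_comm (1:ℂ) w, add_pow, sub_eq_add_neg, add_comm (1:ℂ) (-v), add_pow, sum_mul_sum]
  refine sum_congr rfl fun k _ => sum_congr rfl fun j _ => ?_
  rw [neg_pow]
  ring

lemma integral_expand (hρ : 0 < ρ) (ha : ρ < ‖a‖) (A B : ℕ) :
    (∮ z in C(0, ρ), (1 + (z - a)⁻¹) ^ A * (1 - z⁻¹) ^ B)
      = ∑ k ∈ range (A+1), ∑ j ∈ range (B+1),
          ((A.choose k : ℂ) * (B.choose j) * (-1) ^ j) * G a ρ k j := by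
  have h1 : (fun z : ℂ => (1 + (z - a)⁻¹) ^ A * (1 - z⁻¹) ^ B)
      = fun z : ℂ => ∑ k ∈ range (A+1), ∑ j ∈ range (B+1),
          ((A.choose k : ℂ) * (B.choose j) * (-1) ^ j) * (((z - a)⁻¹) ^ k * (z⁻¹) ^ j) :=
    funext fun z => expand A B ((z - a)⁻¹) (z⁻¹)
  rw [h1, circleIntegral_finset_sum]
  · refine sum_congr rfl fun k _ => ?_
    rw [circleIntegral_finset_sum]
    · refine sum_congr rfl fun j _ => ?_
      rw [circleIntegral.integral_const_mul]
      rfl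
    · intro j _
      exact (continuousOn_const.mul (contOn hρ ha k j)).circleIntegrable hρ.le
  · intro k _
    apply ContinuousOn.circleIntegrable hρ.le
    apply continuousOn_finset_sum
    intro j _
    exact continuousOn_const.mul (contOn hρ ha k j)

lemma E_split (k j : ℕ) (c : ℂ) :
    c * E k j
      = (if j = 0 then (if k = 1 then c * (2 * Real.pi * I) else 0) else 0)
        + (if j = 1 then (if k = 0 then -(c * (2 * Real.pi * I)) else 0) else 0) := by
  unfold E
  split_ifs <;> first | ring1 | (exfalso; omega)

lemma sum_E (A B : ℕ) :
    (∑ k ∈ range (A+1), ∑ j ∈ range (B+1), ((A.choose k : ℂ) * (B.choose j)) * E k j)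
      = 2 * Real.pi * I * ((A : ℂ) - (B : ℂ)) := by
  have h1 : (∑ k ∈ range (A+1), ∑ j ∈ range (B+1), ((A.choose k : ℂ) * (B.choose j)) * E k j)
      = (∑ k ∈ range (A+1), ∑ j ∈ range (B+1),
          (if j = 0 then (if k = 1 then ((A.choose k : ℂ) * (B.choose j)) * (2 * Real.pi * I)
            else 0) else 0))
        + (∑ k ∈ range (A+1), ∑ j ∈ range (B+1),
          (if j = 1 then (if k = 0 then -(((A.choose k : ℂ) * (B.choose j)) * (2 * Real.pi * I))
            else 0) else 0)) := by
    rw [← Finset.sum_add_distrib]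
    refine sum_congr rfl fun k _ => ?_
    rw [← Finset.sum_add_distrib]
    exact sum_congr rfl fun j _ => E_split k j _
  rw [h1]
  have h2 : (∑ k ∈ range (A+1), ∑ j ∈ range (B+1),
      (if j = 0 then (if k = 1 then ((A.choose k : ℂ) * (B.choose j)) * (2 * Real.pi * I)
        else 0) else 0)) = (A : ℂ) * (2 * Real.pi * I) := by
    have := fun k => Finset.sum_ite_eq' (range (B+1)) 0
      (fun j => if k = 1 then ((A.choose k : ℂ) * (B.choose j)) * (2 * Real.pi * I) else 0)
    simp only [this, Finset.mem_range, Nat.lt_add_one_iff, Nat.zero_le, if_true,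
      Nat.choose_zero_right, Nat.cast_one, mul_one]
    rw [Finset.sum_ite_eq' (range (A+1)) 1
      (fun k => ((A.choose k : ℂ)) * (2 * Real.pi * I))]
    rcases Nat.eq_zero_or_pos A with rfl | hA
    · simp
    · rw [if_pos (Finset.mem_range.2 (by omega))]
      simp [Nat.choose_one_right]
  have h3 : (∑ k ∈ range (A+1), ∑ j ∈ range (B+1),
      (if j = 1 then (if k = 0 then -(((A.choose k : ℂ) * (B.choose j)) * (2 * Real.pi * I))
        else 0) else 0)) = -((B : ℂ) * (2 * Real.pi * I)) := by
    have := fun k => Finset.sum_ite_eq' (range (B+1)) 1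
      (fun j => if k = 0 then -(((A.choose k : ℂ) * (B.choose j)) * (2 * Real.pi * I)) else 0)
    simp only [this]
    rcases Nat.eq_zero_or_pos B with rfl | hB
    · simp
    · have hmem : (1:ℕ) ∈ range (B+1) := Finset.mem_range.2 (by omega)
      simp only [hmem, if_true]
      rw [Finset.sum_ite_eq' (range (A+1)) 0
        (fun k => -(((A.choose k : ℂ) * (B.choose 1)) * (2 * Real.pi * I)))]
      rw [if_pos (Finset.mem_range.2 (by omega : (0:ℕ) < A + 1))]
      simp [Nat.choose_one_right]
  rw [h2, h3]
  ring

end AuxFProof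

end AuxFProof

/-- Symmetry relation: `f_{A,B}(u) = f_{B,A}(u) + (A − B)`. -/
theorem stmt0 (A B : ℕ) (u : ℂ) (hu : u ≠ 1) :
    f A B u = f B A u + ((A : ℂ) - (B : ℂ)) := by
  have ha0 : (1 : ℂ) - u ≠ 0 := sub_ne_zero.2 fun h => hu h.symm
  have habs : 0 < ‖1 - u‖ := norm_pos_iff.2 ha0
  have hρ : 0 < ‖1 - u‖ / 2 := half_pos habs
  have ha : ‖1 - u‖ / 2 < ‖(1 : ℂ) - u‖ := half_lt_self habs
  have h2pi : (2 * Real.pi * Complex.I : ℂ) ≠ 0 := by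
    simp [Real.pi_ne_zero, Complex.I_ne_zero]
  have e1 : ∀ X Y : ℕ,
      (∮ z in C(0, ‖1 - u‖ / 2), (1 + (u + z - 1)⁻¹) ^ X * (1 - z⁻¹) ^ Y)
        = ∑ k ∈ Finset.range (X+1), ∑ j ∈ Finset.range (Y+1),
            ((X.choose k : ℂ) * (Y.choose j) * (-1) ^ j)
              * AuxFProof.G (1 - u) (‖1 - u‖ / 2) k j := by
    intro X Y
    rw [show (fun z : ℂ => (1 + (u + z - 1)⁻¹) ^ X * (1 - z⁻¹) ^ Y)
        = (fun z : ℂ => (1 + (z - (1 - u))⁻¹) ^ X * (1 - z⁻¹) ^ Y) from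
      funext fun z => by rw [show u + z - 1 = z - (1 - u) from by ring]]
    exact AuxFProof.integral_expand hρ ha X Y
  have hswap :
      (∑ k ∈ Finset.range (B+1), ∑ j ∈ Finset.range (A+1),
          ((B.choose k : ℂ) * (A.choose j) * (-1) ^ j)
            * AuxFProof.G (1 - u) (‖1 - u‖ / 2) k j)
        = ∑ k ∈ Finset.range (A+1), ∑ j ∈ Finset.range (B+1),
            ((A.choose k : ℂ) * (B.choose j) * (-1) ^ k)
              * AuxFProof.G (1 - u) (‖1 - u‖ / 2) j k := by
    rw [Finset.sum_comm]
    exact Finset.sum_congr rfl fun k _ => Finset.sum_congr rfl fun j _ => by ring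
  have key :
      (∮ z in C(0, ‖1 - u‖ / 2), (1 + (u + z - 1)⁻¹) ^ A * (1 - z⁻¹) ^ B)
        - (∮ z in C(0, ‖1 - u‖ / 2), (1 + (u + z - 1)⁻¹) ^ B * (1 - z⁻¹) ^ A)
        = 2 * Real.pi * Complex.I * ((A : ℂ) - (B : ℂ)) := by
    rw [e1 A B, e1 B A, hswap, ← Finset.sum_sub_distrib]
    rw [show (2 * Real.pi * Complex.I * ((A : ℂ) - (B : ℂ)))
        = ∑ k ∈ Finset.range (A+1), ∑ j ∈ Finset.range (B+1),
            ((A.choose k : ℂ) * (B.choose j)) * AuxFProof.E k j from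
      (AuxFProof.sum_E A B).symm]
    refine Finset.sum_congr rfl fun k _ => ?_
    rw [← Finset.sum_sub_distrib]
    refine Finset.sum_congr rfl fun j _ => ?_
    rw [← AuxFProof.D_val hρ ha (k + j) k j le_rfl, AuxFProof.D]
    ring
  show (2 * Real.pi * Complex.I)⁻¹ * _ = (2 * Real.pi * Complex.I)⁻¹ * _ + _
  rw [← sub_eq_iff_eq_add', ← mul_sub, key, ← mul_assoc, inv_mul_cancel₀ h2pi, one_mul]
end

section
/- For all integers A ≥ 1, B ≥ 1 and every complex u ≠ 1, the function u ↦ f_{A,B}(u) is differentiable at u and its derivative equals both −A·(f_{A−1,B}(u) − 2 f_{A,B}(u) + f_{A+1,B}(u)) and −B·(f_{A,B−1}(u) − 2 f_{A,B}(u) + f_{A,B+1}(u)). -/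
open Complex Metric Set

/-- The integrand of `f`. -/
noncomputable def gg (n m : ℕ) (u z : ℂ) : ℂ := (1 + (u + z - 1)⁻¹) ^ n * (1 - z⁻¹) ^ m

/-- Derivative of `gg` in the parameter `u`. -/
noncomputable def ggu (n m : ℕ) (u z : ℂ) : ℂ :=
  ((n : ℂ) * (1 + (u + z - 1)⁻¹) ^ (n - 1) * (-1 / (u + z - 1) ^ 2)) * (1 - z⁻¹) ^ m

/-- Derivative of `gg` in `z`. -/
noncomputable def ggz (n m : ℕ) (u z : ℂ) : ℂ :=
  ggu n m u z + (1 + (u + z - 1)⁻¹) ^ n * ((m : ℂ) * (1 - z⁻¹) ^ (m - 1) * (z ^ 2)⁻¹)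

lemma abs_pos_of_ne_one {v : ℂ} (hv : v ≠ 1) : 0 < ‖1 - v‖ := by
  simpa using sub_ne_zero.mpr (Ne.symm hv)

lemma sphere_facts {v z : ℂ} {r : ℝ} (h0 : 0 < r) (hr : r < ‖1 - v‖)
    (hz : z ∈ sphere (0 : ℂ) r) : z ≠ 0 ∧ v + z - 1 ≠ 0 := by
  rw [mem_sphere_zero_iff_norm] at hz
  constructor
  · rintro rfl; simp at hz; linarith
  · intro h
    have hz1 : z = 1 - v := by linear_combination h
    rw [hz1] at hz
    linarith

lemma gg_differentiableAt {n m : ℕ} {v z : ℂ} (h1 : z ≠ 0) (h2 : v + z - 1 ≠ 0) :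
    DifferentiableAt ℂ (gg n m v) z := by
  have hd1 : DifferentiableAt ℂ (fun z : ℂ => v + z - 1) z :=
    (differentiableAt_id.const_add v).sub_const 1
  exact (((hd1.inv h2).const_add 1).pow n).mul
    (((differentiableAt_id.inv h1).const_sub 1).pow m)

lemma gg_continuousOn_sphere {n m : ℕ} {v : ℂ} {r : ℝ} (h0 : 0 < r)
    (hr : r < ‖1 - v‖) : ContinuousOn (gg n m v) (sphere (0 : ℂ) r) := fun z hz => by
  obtain ⟨h1, h2⟩ := sphere_facts h0 hr hz
  exact (gg_differentiableAt h1 h2).continuousAt.continuousWithinAt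

lemma gg_circleIntegrable {n m : ℕ} {v : ℂ} {r : ℝ} (h0 : 0 < r)
    (hr : r < ‖1 - v‖) : CircleIntegrable (gg n m v) 0 r :=
  (gg_continuousOn_sphere h0 hr).circleIntegrable h0.le

lemma integral_radius_eq {n m : ℕ} {v : ℂ} {r R : ℝ} (h0 : 0 < r) (hle : r ≤ R)
    (hR : R < ‖1 - v‖) :
    (∮ z in C(0, R), gg n m v z) = ∮ z in C(0, r), gg n m v z := by
  have key : ∀ z : ℂ, z ∈ closedBall (0 : ℂ) R \ ball (0 : ℂ) r → z ≠ 0 ∧ v + z - 1 ≠ 0 := by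
    intro z hz
    obtain ⟨hz1, hz2⟩ := hz
    rw [mem_closedBall_zero_iff] at hz1
    rw [mem_ball_zero_iff, not_lt] at hz2
    constructor
    · rintro rfl; simp at hz2; linarith
    · intro h
      have hz3 : z = 1 - v := by linear_combination h
      rw [hz3] at hz1
      linarith
  refine circleIntegral_eq_of_differentiable_on_annulus_off_countable h0 hle countable_empty
    (fun z hz => ?_) (fun z hz => ?_)
  · obtain ⟨h1, h2⟩ := key z hz
    exact (gg_differentiableAt h1 h2).continuousAt.continuousWithinAt
  · obtain ⟨h1, h2⟩ := key z
      ⟨ball_subset_closedBall hz.1.1, fun h => hz.1.2 (ball_subset_closedBall h)⟩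
    exact gg_differentiableAt h1 h2

lemma f_eq_integral {n m : ℕ} {v : ℂ} (hv : v ≠ 1) {r : ℝ} (h0 : 0 < r)
    (hr : r < ‖1 - v‖) :
    f n m v = (2 * Real.pi * Complex.I)⁻¹ * ∮ z in C(0, r), gg n m v z := by
  have hd : 0 < ‖1 - v‖ := abs_pos_of_ne_one hv
  have hhalf : ‖1 - v‖ / 2 < ‖1 - v‖ := by linarith
  have hhalf0 : 0 < ‖1 - v‖ / 2 := by linarith
  unfold f
  rcases le_total r (‖1 - v‖ / 2) with h | h
  · rw [show (∮ z in C(0, ‖1 - v‖ / 2), (1 + (v + z - 1)⁻¹) ^ n * (1 - z⁻¹) ^ m)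
        = ∮ z in C(0, ‖1 - v‖ / 2), gg n m v z from rfl,
      integral_radius_eq h0 h hhalf]
  · rw [show (∮ z in C(0, ‖1 - v‖ / 2), (1 + (v + z - 1)⁻¹) ^ n * (1 - z⁻¹) ^ m)
        = ∮ z in C(0, ‖1 - v‖ / 2), gg n m v z from rfl,
      ← integral_radius_eq hhalf0 h hr]

lemma gg_hasDerivAt_param (n m : ℕ) (z : ℂ) {v : ℂ} (h2 : v + z - 1 ≠ 0) :
    HasDerivAt (fun w => gg n m w z) (ggu n m v z) v := by
  have h0 : HasDerivAt (fun w : ℂ => w + z - 1) 1 v := by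
    simpa using ((hasDerivAt_id v).add_const z).sub_const 1
  have h1 : HasDerivAt (fun w : ℂ => 1 + (w + z - 1)⁻¹) (-1 / (v + z - 1) ^ 2) v :=
    (h0.inv h2).const_add 1
  exact (h1.pow n).mul_const ((1 - z⁻¹) ^ m)

lemma gg_hasDerivAt_z (n m : ℕ) {v z : ℂ} (h1 : z ≠ 0) (h2 : v + z - 1 ≠ 0) :
    HasDerivAt (fun w => gg n m v w) (ggz n m v z) z := by
  have h0 : HasDerivAt (fun w : ℂ => v + w - 1) 1 z := by
    simpa using ((hasDerivAt_id z).const_add v).sub_const 1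
  have hA : HasDerivAt (fun w : ℂ => (1 + (v + w - 1)⁻¹) ^ n)
      ((n : ℂ) * (1 + (v + z - 1)⁻¹) ^ (n - 1) * (-1 / (v + z - 1) ^ 2)) z :=
    ((h0.inv h2).const_add 1).pow n
  have hB : HasDerivAt (fun w : ℂ => (1 - w⁻¹) ^ m)
      ((m : ℂ) * (1 - z⁻¹) ^ (m - 1) * (z ^ 2)⁻¹) z := by
    have := ((hasDerivAt_inv h1).const_sub 1).fun_pow m
    exact this.congr_deriv (by ring)
  exact hA.mul hB

lemma ggu_eq (n m : ℕ) (v z : ℂ) :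
    ggu (n + 1) m v z
      = -((n : ℂ) + 1) * (gg n m v z - 2 * gg (n + 1) m v z + gg (n + 2) m v z) := by
  unfold ggu gg
  rw [show (-1 / (v + z - 1) ^ 2 : ℂ) = -(((v + z - 1)⁻¹) ^ 2) by
    rw [neg_div, one_div, inv_pow]]
  simp only [Nat.add_sub_cancel]
  push_cast
  ring

lemma ggz2_eq (n m : ℕ) (v z : ℂ) :
    (1 + (v + z - 1)⁻¹) ^ n * (((m : ℂ) + 1) * (1 - z⁻¹) ^ m * (z ^ 2)⁻¹)
      = ((m : ℂ) + 1) * (gg n m v z - 2 * gg n (m + 1) v z + gg n (m + 2) v z) := by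
  unfold gg
  rw [show ((z : ℂ) ^ 2)⁻¹ = (z⁻¹) ^ 2 by rw [inv_pow]]
  ring

lemma circleIntegral_comb {p q s : ℂ → ℂ} {c : ℂ} {R : ℝ} (hp : CircleIntegrable p c R)
    (hq : CircleIntegrable q c R) (hs : CircleIntegrable s c R) :
    (∮ z in C(c, R), (p z - 2 * q z + s z))
      = (∮ z in C(c, R), p z) - 2 * (∮ z in C(c, R), q z) + ∮ z in C(c, R), s z := by
  have h2q : CircleIntegrable (fun z => 2 * q z) c R := IntervalIntegrable.const_mul hq 2
  have h2qs : CircleIntegrable (fun z => 2 * q z - s z) c R := IntervalIntegrable.sub h2q hs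
  have e : (∮ z in C(c, R), (p z - 2 * q z + s z))
      = ∮ z in C(c, R), (p z - (2 * q z - s z)) := by
    congr 1; funext z; ring
  rw [e, circleIntegral.integral_sub hp h2qs, circleIntegral.integral_sub h2q hs,
    circleIntegral.integral_const_mul]
  ring

lemma cont_aux {h : ℂ → ℂ} {r : ℝ} (hr : 0 ≤ r) (hc : ContinuousOn h (sphere (0 : ℂ) r)) :
    Continuous fun θ : ℝ => deriv (circleMap 0 r) θ * h (circleMap 0 r θ) := by
  have h1 : Continuous fun θ : ℝ => h (circleMap 0 r θ) :=
    hc.comp_continuous (continuous_circleMap 0 r) fun θ => circleMap_mem_sphere 0 hr θ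
  have h2 : Continuous fun θ : ℝ => deriv (circleMap 0 r) θ := by
    simp only [deriv_circleMap]
    exact (continuous_circleMap 0 r).mul continuous_const
  exact h2.mul h1

lemma ggu_continuousAt {n m : ℕ} {p : ℂ × ℂ} (h1 : p.2 ≠ 0) (h2 : p.1 + p.2 - 1 ≠ 0) :
    ContinuousAt (fun q : ℂ × ℂ => ggu n m q.1 q.2) p := by
  have c1 : ContinuousAt (fun q : ℂ × ℂ => q.1 + q.2 - 1) p :=
    ((continuous_fst.add continuous_snd).sub continuous_const).continuousAt
  have c2 : ContinuousAt (fun q : ℂ × ℂ => (1 + (q.1 + q.2 - 1)⁻¹) ^ (n - 1)) p :=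
    (continuousAt_const.add (c1.inv₀ h2)).pow (n - 1)
  have c3 : ContinuousAt (fun q : ℂ × ℂ => -1 / (q.1 + q.2 - 1) ^ 2) p :=
    continuousAt_const.div (c1.pow 2) (pow_ne_zero 2 h2)
  have c4 : ContinuousAt (fun q : ℂ × ℂ => (1 - q.2⁻¹) ^ m) p :=
    (continuousAt_const.sub (continuous_snd.continuousAt.inv₀ h1)).pow m
  exact ((continuousAt_const.mul c2).mul c3).mul c4

lemma ggu_continuousOn_sphere {n m : ℕ} {v : ℂ} {r : ℝ} (h0 : 0 < r)
    (hr : r < ‖1 - v‖) : ContinuousOn (ggu n m v) (sphere (0 : ℂ) r) := by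
  intro z hz
  obtain ⟨h1, h2⟩ := sphere_facts h0 hr hz
  have := (ggu_continuousAt (n := n) (m := m) (p := (v, z)) h1 h2).comp
    (Continuous.continuousAt (continuous_const.prodMk continuous_id) :
      ContinuousAt (fun z : ℂ => ((v : ℂ), z)) z)
  exact this.continuousWithinAt

lemma abs_lower {u v : ℂ} (hu : u ≠ 1)
    (hv : v ∈ closedBall u (‖1 - u‖ / 8)) :
    ‖1 - u‖ / 2 < ‖1 - v‖ := by
  have hd : 0 < ‖1 - u‖ := abs_pos_of_ne_one hu
  rw [mem_closedBall, dist_eq_norm] at hv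
  have h := norm_add_le (1 - v) (v - u)
  rw [show (1 - v) + (v - u) = 1 - u by ring] at h
  linarith

lemma hasDerivAt_integral (n m : ℕ) {u : ℂ} (hu : u ≠ 1) :
    HasDerivAt (fun v => ∮ z in C(0, ‖1 - u‖ / 2), gg n m v z)
      (∮ z in C(0, ‖1 - u‖ / 2), ggu n m u z) u := by
  set d : ℝ := ‖1 - u‖ with hd_def
  have hd : 0 < d := abs_pos_of_ne_one hu
  have hball : ∀ v ∈ closedBall u (d / 8), d / 2 < ‖1 - v‖ := fun v hv =>
    abs_lower hu hv
  have h8 : (0 : ℝ) < d / 8 := by linarith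
  have h2pos : (0 : ℝ) < d / 2 := by linarith
  obtain ⟨C, hC⟩ : ∃ C, ∀ p ∈ closedBall u (d / 8) ×ˢ sphere (0 : ℂ) (d / 2),
      ‖ggu n m p.1 p.2‖ ≤ C := by
    refine IsCompact.exists_bound_of_continuousOn
      ((isCompact_closedBall u (d / 8)).prod (isCompact_sphere 0 (d / 2))) ?_
    intro p hp
    obtain ⟨h1, h2⟩ := sphere_facts h2pos (hball p.1 hp.1) hp.2
    exact (ggu_continuousAt h1 h2).continuousWithinAt
  have hcont : ∀ v, d / 2 < ‖1 - v‖ →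
      Continuous fun θ : ℝ =>
        deriv (circleMap 0 (d / 2)) θ * gg n m v (circleMap 0 (d / 2) θ) := fun v hv =>
    cont_aux h2pos.le (gg_continuousOn_sphere h2pos hv)
  have hcont' : Continuous fun θ : ℝ =>
      deriv (circleMap 0 (d / 2)) θ * ggu n m u (circleMap 0 (d / 2) θ) :=
    cont_aux h2pos.le (ggu_continuousOn_sphere h2pos (hball u (mem_closedBall_self (by linarith))))
  simp only [circleIntegral, smul_eq_mul]
  refine (intervalIntegral.hasDerivAt_integral_of_dominated_loc_of_deriv_le
    (F := fun v θ => deriv (circleMap 0 (d / 2)) θ * gg n m v (circleMap 0 (d / 2) θ))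
    (F' := fun v θ => deriv (circleMap 0 (d / 2)) θ * ggu n m v (circleMap 0 (d / 2) θ))
    (bound := fun _ => d / 2 * C) (Metric.ball_mem_nhds u h8) ?_ ?_ ?_ ?_ ?_ ?_).2
  · filter_upwards [Filter.eventually_mem_set.mpr (Metric.ball_mem_nhds u h8)] with v hv
    exact (hcont v (hball v (ball_subset_closedBall hv))).aestronglyMeasurable
  · exact (hcont u (hball u (mem_closedBall_self (by linarith)))).intervalIntegrable _ _
  · exact hcont'.aestronglyMeasurable
  · refine Filter.Eventually.of_forall fun θ _ => fun v hv => ?_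
    have hnorm : ‖deriv (circleMap 0 (d / 2)) θ‖ = d / 2 := by
      simp [deriv_circleMap, norm_mul, norm_circleMap_zero, abs_of_pos h2pos]
    rw [norm_mul, hnorm]
    exact mul_le_mul_of_nonneg_left
      (hC (v, circleMap 0 (d / 2) θ)
        ⟨ball_subset_closedBall hv, circleMap_mem_sphere 0 h2pos.le θ⟩) h2pos.le
  · exact intervalIntegrable_const
  · refine Filter.Eventually.of_forall fun θ _ => fun v hv => ?_
    have h2 : v + circleMap 0 (d / 2) θ - 1 ≠ 0 :=
      (sphere_facts h2pos (hball v (ball_subset_closedBall hv))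
        (circleMap_mem_sphere 0 h2pos.le θ)).2
    exact (gg_hasDerivAt_param n m _ h2).const_mul _

/-- Integration by parts on the circle: the `u`-derivative integral can be traded
for the `z`-derivative of the second factor. -/
lemma integral_ggu_z (n m : ℕ) {u : ℂ} {r : ℝ} (h0 : 0 < r)
    (hr : r < ‖1 - u‖) :
    (∮ z in C(0, r), ggu n (m + 1) u z)
      = -(((m : ℂ) + 1) * ((∮ z in C(0, r), gg n m u z)
          - 2 * (∮ z in C(0, r), gg n (m + 1) u z) + ∮ z in C(0, r), gg n (m + 2) u z)) := by
  set q : ℂ → ℂ :=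
    fun z => ((m : ℂ) + 1) * (gg n m u z - 2 * gg n (m + 1) u z + gg n (m + 2) u z) with hq_def
  have hderiv : ∀ z ∈ sphere (0 : ℂ) r, HasDerivWithinAt (fun w => gg n (m + 1) u w)
      (ggu n (m + 1) u z + q z) (sphere (0 : ℂ) r) z := by
    intro z hz
    obtain ⟨h1, h2⟩ := sphere_facts h0 hr hz
    have h := (gg_hasDerivAt_z n (m + 1) h1 h2).hasDerivWithinAt (s := sphere (0:ℂ) r)
    have e : ggz n (m + 1) u z = ggu n (m + 1) u z + q z := by
      unfold ggz
      rw [hq_def]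
      congr 1
      simp only [Nat.add_sub_cancel]
      push_cast
      exact ggz2_eq n m u z
    rwa [e] at h
  have hzero : (∮ z in C(0, r), (ggu n (m + 1) u z + q z)) = 0 :=
    circleIntegral.integral_eq_zero_of_hasDerivWithinAt h0.le hderiv
  have hp : CircleIntegrable (ggu n (m + 1) u) 0 r :=
    (ggu_continuousOn_sphere h0 hr).circleIntegrable h0.le
  have hcomb : CircleIntegrable
      (fun z => gg n m u z - 2 * gg n (m + 1) u z + gg n (m + 2) u z) 0 r :=
    IntervalIntegrable.add
      (IntervalIntegrable.sub (gg_circleIntegrable h0 hr)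
        (IntervalIntegrable.const_mul (gg_circleIntegrable h0 hr) 2))
      (gg_circleIntegrable h0 hr)
  have hq : CircleIntegrable q 0 r := IntervalIntegrable.const_mul hcomb _
  have e2 : (∮ z in C(0, r), ggu n (m + 1) u z)
      = ∮ z in C(0, r), ((ggu n (m + 1) u z + q z) - q z) := by
    congr 1; funext z; ring
  have hpq : CircleIntegrable (fun z => ggu n (m + 1) u z + q z) 0 r :=
    IntervalIntegrable.add hp hq
  rw [e2, circleIntegral.integral_sub hpq hq, hzero, zero_sub, hq_def]
  rw [show (∮ z in C(0, r),
        ((m : ℂ) + 1) * (gg n m u z - 2 * gg n (m + 1) u z + gg n (m + 2) u z))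
      = ((m : ℂ) + 1) * ∮ z in C(0, r),
        (gg n m u z - 2 * gg n (m + 1) u z + gg n (m + 2) u z) from
    circleIntegral.integral_const_mul _ _ _ _]
  rw [circleIntegral_comb (gg_circleIntegrable h0 hr) (gg_circleIntegrable h0 hr)
    (gg_circleIntegrable h0 hr)]

/-- Derivative identity: `∂_u f_{A,B} = −A(f_{A−1,B} − 2f_{A,B} + f_{A+1,B})
= −B(f_{A,B−1} − 2f_{A,B} + f_{A,B+1})`. -/
theorem stmt1 (A B : ℕ) (hA : 1 ≤ A) (hB : 1 ≤ B) (u : ℂ) (hu : u ≠ 1) :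
    DifferentiableAt ℂ (f A B) u ∧
    deriv (f A B) u = -(A : ℂ) * (f (A - 1) B u - 2 * f A B u + f (A + 1) B u) ∧
    deriv (f A B) u = -(B : ℂ) * (f A (B - 1) u - 2 * f A B u + f A (B + 1) u) := by
  obtain ⟨a, rfl⟩ : ∃ a, A = a + 1 := ⟨A - 1, (Nat.succ_pred_eq_of_pos hA).symm⟩
  obtain ⟨b, rfl⟩ : ∃ b, B = b + 1 := ⟨B - 1, (Nat.succ_pred_eq_of_pos hB).symm⟩
  set d : ℝ := ‖1 - u‖ with hd_def
  have hd : 0 < d := abs_pos_of_ne_one hu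
  have h2pos : (0 : ℝ) < d / 2 := by linarith
  have hhalf : d / 2 < d := by linarith
  set c₀ : ℂ := (2 * Real.pi * Complex.I)⁻¹ with hc₀
  have hF := hasDerivAt_integral (a + 1) (b + 1) hu
  have hF' := hF.const_mul c₀
  have hloc : (fun v => c₀ * ∮ z in C(0, d / 2), gg (a + 1) (b + 1) v z)
      =ᶠ[nhds u] f (a + 1) (b + 1) := by
    filter_upwards [Metric.ball_mem_nhds u (by linarith : (0:ℝ) < d / 8)] with v hv
    have hv' : d / 2 < ‖1 - v‖ := abs_lower hu (ball_subset_closedBall hv)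
    have hv1 : v ≠ 1 := by
      intro h
      rw [h] at hv'
      simp at hv'
      linarith
    exact (f_eq_integral hv1 h2pos hv').symm
  have hderiv_f : HasDerivAt (f (a + 1) (b + 1))
      (c₀ * ∮ z in C(0, d / 2), ggu (a + 1) (b + 1) u z) u :=
    hF'.congr_of_eventuallyEq hloc.symm
  have hfk : ∀ n m : ℕ, f n m u = c₀ * ∮ z in C(0, d / 2), gg n m u z := fun n m =>
    f_eq_integral hu h2pos hhalf
  have e1 : (∮ z in C(0, d / 2), ggu (a + 1) (b + 1) u z)
      = -((a : ℂ) + 1) * ((∮ z in C(0, d / 2), gg a (b + 1) u z)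
          - 2 * (∮ z in C(0, d / 2), gg (a + 1) (b + 1) u z)
          + ∮ z in C(0, d / 2), gg (a + 2) (b + 1) u z) := by
    rw [show (∮ z in C(0, d / 2), ggu (a + 1) (b + 1) u z)
        = ∮ z in C(0, d / 2), -((a : ℂ) + 1) * (gg a (b + 1) u z
            - 2 * gg (a + 1) (b + 1) u z + gg (a + 2) (b + 1) u z) from
      circleIntegral.integral_congr h2pos.le fun z _ => ggu_eq a (b + 1) u z]
    rw [circleIntegral.integral_const_mul]
    rw [circleIntegral_comb (gg_circleIntegrable h2pos hhalf)
      (gg_circleIntegrable h2pos hhalf) (gg_circleIntegrable h2pos hhalf)]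
  have e2 := integral_ggu_z (a + 1) b h2pos hhalf
  refine ⟨hderiv_f.differentiableAt, ?_, ?_⟩
  · rw [hderiv_f.deriv, e1]
    simp only [Nat.add_sub_cancel]
    rw [hfk a (b + 1), hfk (a + 1) (b + 1), hfk (a + 2) (b + 1)]
    push_cast
    ring
  · rw [hderiv_f.deriv, e2]
    simp only [Nat.add_sub_cancel]
    rw [hfk (a + 1) b, hfk (a + 1) (b + 1), hfk (a + 1) (b + 2)]
    push_cast
    ring
end

section
/- For all integers A ≥ 1, B ≥ 1 and every complex u with u ≠ 1 and u ≠ −1, there holds the quadratic relation f_{A,B}(u) + ((u+1)/(u−1))·f_{A−1,B−1}(u) − (u/(u−1))·[ f_{A−1,B}(u) + f_{A,B−1}(u) ] = 0. -/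
private lemma circleIntegral_split {f1 f2 f3 f4 : ℂ → ℂ} {c : ℂ} {R : ℝ} (c1 c2 : ℂ)
    (h1 : CircleIntegrable f1 c R) (h2 : CircleIntegrable f2 c R)
    (h3 : CircleIntegrable f3 c R) (h4 : CircleIntegrable f4 c R) :
    (∮ z in C(c, R), (f1 z + c1 * f2 z - c2 * f3 z - c2 * f4 z))
      = (∮ z in C(c, R), f1 z) + c1 * (∮ z in C(c, R), f2 z)
        - c2 * (∮ z in C(c, R), f3 z) - c2 * (∮ z in C(c, R), f4 z) := by
  have e1 := h1.out
  have e2 := h2.out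
  have e3 := h3.out
  have e4 := h4.out
  simp only [smul_eq_mul] at e1 e2 e3 e4
  simp only [circleIntegral, smul_eq_mul]
  rw [show (fun θ : ℝ => deriv (circleMap c R) θ *
        (f1 (circleMap c R θ) + c1 * f2 (circleMap c R θ)
          - c2 * f3 (circleMap c R θ) - c2 * f4 (circleMap c R θ)))
      = fun θ : ℝ => deriv (circleMap c R) θ * f1 (circleMap c R θ)
          + c1 * (deriv (circleMap c R) θ * f2 (circleMap c R θ))
          - c2 * (deriv (circleMap c R) θ * f3 (circleMap c R θ))
          - c2 * (deriv (circleMap c R) θ * f4 (circleMap c R θ)) from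
      funext fun θ => by ring]
  rw [intervalIntegral.integral_sub
        ((e1.add (e2.const_mul c1)).sub (e3.const_mul c2)) (e4.const_mul c2),
      intervalIntegral.integral_sub (e1.add (e2.const_mul c1)) (e3.const_mul c2),
      intervalIntegral.integral_add e1 (e2.const_mul c1),
      intervalIntegral.integral_const_mul, intervalIntegral.integral_const_mul,
      intervalIntegral.integral_const_mul]

/-- Quadratic relation (\ref{fAB-quad}). -/
theorem stmt3 (A B : ℕ) (hA : 1 ≤ A) (hB : 1 ≤ B) (u : ℂ) (hu1 : u ≠ 1)
    (hum1 : u ≠ -1) :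
    f A B u + ((u + 1) / (u - 1)) * f (A - 1) (B - 1) u
      - (u / (u - 1)) * (f (A - 1) B u + f A (B - 1) u) = 0 := by
  obtain ⟨a, rfl⟩ : ∃ a, A = a + 1 := ⟨A - 1, by omega⟩
  obtain ⟨b, rfl⟩ : ∃ b, B = b + 1 := ⟨B - 1, by omega⟩
  have hu : u - 1 ≠ 0 := sub_ne_zero.mpr hu1
  set r : ℝ := ‖1 - u‖ / 2 with hr
  have habs : 0 < ‖1 - u‖ := norm_pos_iff.mpr (sub_ne_zero.mpr (Ne.symm hu1))
  have hrpos : 0 < r := half_pos habs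
  -- points on the circle avoid the singularities
  have hz0 : ∀ z ∈ Metric.sphere (0 : ℂ) r, z ≠ 0 := by
    intro z hz h
    simp only [Metric.mem_sphere, Complex.dist_eq, sub_zero, h, map_zero, norm_zero] at hz
    exact hrpos.ne hz
  have hz1 : ∀ z ∈ Metric.sphere (0 : ℂ) r, u + z - 1 ≠ 0 := by
    intro z hz h
    have hzeq : z = 1 - u := by linear_combination h
    simp only [Metric.mem_sphere, Complex.dist_eq, sub_zero, hzeq] at hz
    rw [hr] at hz
    linarith
  -- continuity / integrability of each integrand on the circle
  have hcont : ∀ n m : ℕ,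
      ContinuousOn (fun z : ℂ => (1 + (u + z - 1)⁻¹) ^ n * (1 - z⁻¹) ^ m)
        (Metric.sphere (0 : ℂ) r) := by
    intro n m
    apply ContinuousOn.mul
    · apply ContinuousOn.pow
      exact continuousOn_const.add (ContinuousOn.inv₀ (by fun_prop) (hz1))
    · apply ContinuousOn.pow
      exact continuousOn_const.sub (ContinuousOn.inv₀ continuousOn_id (hz0))
  have hint : ∀ n m : ℕ,
      CircleIntegrable (fun z : ℂ => (1 + (u + z - 1)⁻¹) ^ n * (1 - z⁻¹) ^ m) 0 r :=
    fun n m => (hcont n m).circleIntegrable hrpos.le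
  -- the pointwise identity on the circle
  have hpt : ∀ z ∈ Metric.sphere (0 : ℂ) r,
      (1 + (u + z - 1)⁻¹) ^ (a + 1) * (1 - z⁻¹) ^ (b + 1)
        + ((u + 1) / (u - 1)) * ((1 + (u + z - 1)⁻¹) ^ a * (1 - z⁻¹) ^ b)
        - (u / (u - 1)) * ((1 + (u + z - 1)⁻¹) ^ a * (1 - z⁻¹) ^ (b + 1))
        - (u / (u - 1)) * ((1 + (u + z - 1)⁻¹) ^ (a + 1) * (1 - z⁻¹) ^ b) = 0 := by
    intro z hz
    have h0 := hz0 z hz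
    have h1 := hz1 z hz
    have key : (1 + (u + z - 1)⁻¹) * (1 - z⁻¹) + (u + 1) / (u - 1)
        - (u / (u - 1)) * (1 - z⁻¹) - (u / (u - 1)) * (1 + (u + z - 1)⁻¹) = 0 := by
      field_simp
      ring
    calc (1 + (u + z - 1)⁻¹) ^ (a + 1) * (1 - z⁻¹) ^ (b + 1)
        + ((u + 1) / (u - 1)) * ((1 + (u + z - 1)⁻¹) ^ a * (1 - z⁻¹) ^ b)
        - (u / (u - 1)) * ((1 + (u + z - 1)⁻¹) ^ a * (1 - z⁻¹) ^ (b + 1))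
        - (u / (u - 1)) * ((1 + (u + z - 1)⁻¹) ^ (a + 1) * (1 - z⁻¹) ^ b)
        = (1 + (u + z - 1)⁻¹) ^ a * (1 - z⁻¹) ^ b *
            ((1 + (u + z - 1)⁻¹) * (1 - z⁻¹) + (u + 1) / (u - 1)
              - (u / (u - 1)) * (1 - z⁻¹) - (u / (u - 1)) * (1 + (u + z - 1)⁻¹)) := by
          ring
      _ = 0 := by rw [key]; ring
  -- the combined circle integral vanishes
  have hcomb :
      (∮ z in C(0, r), ((1 + (u + z - 1)⁻¹) ^ (a + 1) * (1 - z⁻¹) ^ (b + 1)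
        + ((u + 1) / (u - 1)) * ((1 + (u + z - 1)⁻¹) ^ a * (1 - z⁻¹) ^ b)
        - (u / (u - 1)) * ((1 + (u + z - 1)⁻¹) ^ a * (1 - z⁻¹) ^ (b + 1))
        - (u / (u - 1)) * ((1 + (u + z - 1)⁻¹) ^ (a + 1) * (1 - z⁻¹) ^ b))) = 0 := by
    rw [circleIntegral.integral_congr hrpos.le (g := fun _ => (0 : ℂ)) (fun z hz => hpt z hz)]
    simp [circleIntegral]
  -- split the combined integral by linearity
  have hsplit :
      (∮ z in C(0, r), ((1 + (u + z - 1)⁻¹) ^ (a + 1) * (1 - z⁻¹) ^ (b + 1)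
        + ((u + 1) / (u - 1)) * ((1 + (u + z - 1)⁻¹) ^ a * (1 - z⁻¹) ^ b)
        - (u / (u - 1)) * ((1 + (u + z - 1)⁻¹) ^ a * (1 - z⁻¹) ^ (b + 1))
        - (u / (u - 1)) * ((1 + (u + z - 1)⁻¹) ^ (a + 1) * (1 - z⁻¹) ^ b)))
      = (∮ z in C(0, r), (1 + (u + z - 1)⁻¹) ^ (a + 1) * (1 - z⁻¹) ^ (b + 1))
        + ((u + 1) / (u - 1)) * (∮ z in C(0, r), (1 + (u + z - 1)⁻¹) ^ a * (1 - z⁻¹) ^ b)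
        - (u / (u - 1)) * (∮ z in C(0, r), (1 + (u + z - 1)⁻¹) ^ a * (1 - z⁻¹) ^ (b + 1))
        - (u / (u - 1)) * (∮ z in C(0, r), (1 + (u + z - 1)⁻¹) ^ (a + 1) * (1 - z⁻¹) ^ b) :=
    circleIntegral_split _ _ (hint (a+1) (b+1)) (hint a b) (hint a (b+1)) (hint (a+1) b)
  have hkey :
      (∮ z in C(0, r), (1 + (u + z - 1)⁻¹) ^ (a + 1) * (1 - z⁻¹) ^ (b + 1))
        + ((u + 1) / (u - 1)) * (∮ z in C(0, r), (1 + (u + z - 1)⁻¹) ^ a * (1 - z⁻¹) ^ b)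
        - (u / (u - 1)) * (∮ z in C(0, r), (1 + (u + z - 1)⁻¹) ^ a * (1 - z⁻¹) ^ (b + 1))
        - (u / (u - 1)) * (∮ z in C(0, r), (1 + (u + z - 1)⁻¹) ^ (a + 1) * (1 - z⁻¹) ^ b) = 0 := by
    rw [← hsplit]; exact hcomb
  simp only [f, Nat.add_sub_cancel, ← hr]
  linear_combination (2 * Real.pi * Complex.I)⁻¹ * hkey
end

section
/- For all integers A ≥ 1, B ≥ 1 and every complex u with u ∉ {0, 1, −1}, the second derivative of u ↦ f_{A,B}(u) at u equals A·B·[ (f_{A−1,B}(u) + f_{A,B−1}(u))/(u(u+1)) + (f_{A+1,B}(u) + f_{A,B+1}(u))/(u(u−1)) − 4 f_{A,B}(u)/((u+1)(u−1)) ]. -/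
namespace Stmt4Aux

open Complex Metric Real MeasureTheory Set Filter Topology

/-- The integrand. -/
noncomputable def g (A B : ℕ) (u z : ℂ) : ℂ :=
  (1 + (u + z - 1)⁻¹) ^ A * (1 - z⁻¹) ^ B

/-- The `u`-derivative of the integrand. -/
noncomputable def dg (A B : ℕ) (u z : ℂ) : ℂ :=
  (A : ℂ) * (1 + (u + z - 1)⁻¹) ^ (A - 1) * (-((u + z - 1) ^ 2)⁻¹) * (1 - z⁻¹) ^ B

lemma f_eq (A B : ℕ) (u : ℂ) :
    f A B u = (2 * Real.pi * Complex.I)⁻¹ *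
      ∮ z in C(0, ‖1 - u‖ / 2), g A B u z := rfl

lemma w_ne {u z : ℂ} (habs : ‖z‖ < ‖1 - u‖) : u + z - 1 ≠ 0 := by
  intro h
  have hz1 : z = 1 - u := by linear_combination h
  rw [hz1] at habs
  exact lt_irrefl _ habs

lemma z_ne {z : ℂ} {r : ℝ} (h0 : 0 < r) (hz : ‖z‖ = r) : z ≠ 0 := by
  intro h
  rw [h] at hz
  simp at hz
  exact h0.ne' hz.symm

lemma w_ne' {u z : ℂ} {r : ℝ} (hz : ‖z‖ = r) (hr : r < ‖1 - u‖) :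
    u + z - 1 ≠ 0 := w_ne (by rw [hz]; exact hr)

/-! ### Continuity -/

lemma contAt_X {u z : ℂ} (hw : u + z - 1 ≠ 0) :
    ContinuousAt (fun z : ℂ => 1 + (u + z - 1)⁻¹) z :=
  continuousAt_const.add
    (((continuous_const.add continuous_id).sub continuous_const).continuousAt.inv₀ hw)

lemma contAt_Y {z : ℂ} (hz : z ≠ 0) : ContinuousAt (fun z : ℂ => 1 - z⁻¹) z :=
  continuousAt_const.sub (continuousAt_id.inv₀ hz)

lemma contAt_g (A B : ℕ) {u z : ℂ} (hz : z ≠ 0) (hw : u + z - 1 ≠ 0) :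
    ContinuousAt (g A B u) z :=
  ((contAt_X hw).pow A).mul ((contAt_Y hz).pow B)

lemma contAt_dg (A B : ℕ) {u z : ℂ} (hz : z ≠ 0) (hw : u + z - 1 ≠ 0) :
    ContinuousAt (dg A B u) z := by
  have hwc : ContinuousAt (fun z : ℂ => u + z - 1) z :=
    ((continuous_const.add continuous_id).sub continuous_const).continuousAt
  exact ((continuousAt_const.mul ((contAt_X hw).pow (A - 1))).mul
    (((hwc.pow 2).inv₀ (pow_ne_zero 2 hw)).neg)).mul ((contAt_Y hz).pow B)

lemma contOn_g (A B : ℕ) {u : ℂ} {r : ℝ} (h0 : 0 < r) (hr : r < ‖1 - u‖) :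
    ContinuousOn (g A B u) (sphere (0 : ℂ) r) := by
  intro z hzs
  have hza : ‖z‖ = r := by simpa [Complex.dist_eq] using hzs
  exact (contAt_g A B (z_ne h0 hza) (w_ne' hza hr)).continuousWithinAt

lemma contOn_dg (A B : ℕ) {u : ℂ} {r : ℝ} (h0 : 0 < r) (hr : r < ‖1 - u‖) :
    ContinuousOn (dg A B u) (sphere (0 : ℂ) r) := by
  intro z hzs
  have hza : ‖z‖ = r := by simpa [Complex.dist_eq] using hzs
  exact (contAt_dg A B (z_ne h0 hza) (w_ne' hza hr)).continuousWithinAt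

/-! ### Derivatives of the integrand -/

lemma hasDerivAt_gu (A B : ℕ) {u z : ℂ} (hw : u + z - 1 ≠ 0) :
    HasDerivAt (fun u => g A B u z) (dg A B u z) u := by
  have h1 : HasDerivAt (fun u : ℂ => u + z - 1) 1 u := ((hasDerivAt_id u).add_const z).sub_const 1
  have h2 := h1.inv hw
  have h3 := (h2.const_add 1).pow A
  have h4 := h3.mul_const ((1 - z⁻¹) ^ B)
  refine h4.congr_deriv ?_
  unfold dg
  simp only [Pi.inv_apply, Pi.pow_apply]
  ring

lemma hasDerivAt_gz (A B : ℕ) {u z : ℂ} (hz : z ≠ 0) (hw : u + z - 1 ≠ 0) :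
    HasDerivAt (fun z => g A B u z)
      (dg A B u z + (1 + (u + z - 1)⁻¹) ^ A * ((B : ℂ) * (1 - z⁻¹) ^ (B - 1) * (z ^ 2)⁻¹)) z := by
  have h1 : HasDerivAt (fun z : ℂ => u + z - 1) 1 z := ((hasDerivAt_id z).const_add u).sub_const 1
  have h3 := ((h1.inv hw).const_add 1).pow A
  have h5 := ((hasDerivAt_inv hz).const_sub 1).pow B
  refine (h3.mul h5).congr_deriv ?_
  unfold dg
  simp only [Pi.inv_apply, Pi.pow_apply]
  ring

/-! ### Circle integral helpers -/

lemma cint_add {r : ℝ} {h₁ h₂ : ℂ → ℂ} (i₁ : CircleIntegrable h₁ 0 r)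
    (i₂ : CircleIntegrable h₂ 0 r) :
    (∮ z in C(0, r), (h₁ z + h₂ z)) = (∮ z in C(0, r), h₁ z) + ∮ z in C(0, r), h₂ z := by
  simp only [circleIntegral, smul_add, intervalIntegral.integral_add i₁.out i₂.out]

lemma cint_cmul {r : ℝ} (c : ℂ) (h : ℂ → ℂ) :
    (∮ z in C(0, r), c * h z) = c * ∮ z in C(0, r), h z := by
  simpa only [smul_eq_mul] using circleIntegral.integral_smul c h 0 r

lemma split3 {r : ℝ} (h0 : 0 ≤ r) (c₁ c₂ c₃ : ℂ) {h₁ h₂ h₃ : ℂ → ℂ}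
    (i₁ : ContinuousOn h₁ (sphere (0 : ℂ) r)) (i₂ : ContinuousOn h₂ (sphere (0 : ℂ) r))
    (i₃ : ContinuousOn h₃ (sphere (0 : ℂ) r)) :
    (∮ z in C(0, r), (c₁ * h₁ z + (c₂ * h₂ z + c₃ * h₃ z))) =
      c₁ * (∮ z in C(0, r), h₁ z) +
        (c₂ * (∮ z in C(0, r), h₂ z) + c₃ * (∮ z in C(0, r), h₃ z)) := by
  rw [cint_add (h₁ := fun z => c₁ * h₁ z) (h₂ := fun z => c₂ * h₂ z + c₃ * h₃ z) ((continuousOn_const.mul i₁).circleIntegrable h0)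
      (((continuousOn_const.mul i₂).add (continuousOn_const.mul i₃)).circleIntegrable h0),
    cint_add (h₁ := fun z => c₂ * h₂ z) (h₂ := fun z => c₃ * h₃ z) ((continuousOn_const.mul i₂).circleIntegrable h0)
      ((continuousOn_const.mul i₃).circleIntegrable h0),
    cint_cmul, cint_cmul, cint_cmul]

/-- Circle integral of a derivative vanishes. -/
lemma cint_deriv_zero {r : ℝ} {H H' : ℂ → ℂ}
    (hd : ∀ θ : ℝ, HasDerivAt H (H' (circleMap 0 r θ)) (circleMap 0 r θ))
    (hint : CircleIntegrable H' 0 r) :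
    (∮ z in C(0, r), H' z) = 0 := by
  have key : ∀ θ ∈ uIcc (0 : ℝ) (2 * π),
      HasDerivAt (fun t => H (circleMap 0 r t))
        (deriv (circleMap 0 r) θ • H' (circleMap 0 r θ)) θ := by
    intro θ _
    have h1 := hasDerivAt_circleMap 0 r θ
    have h2 := (hd θ).scomp θ h1
    rw [deriv_circleMap]; exact h2
  have hFTC := intervalIntegral.integral_eq_sub_of_hasDerivAt key hint.out
  have hper : circleMap 0 r (2 * π) = circleMap 0 r 0 := by
    simpa using periodic_circleMap 0 r 0
  calc (∮ z in C(0, r), H' z)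
      = ∫ θ in (0 : ℝ)..(2 * π), deriv (circleMap 0 r) θ • H' (circleMap 0 r θ) := rfl
    _ = H (circleMap 0 r (2 * π)) - H (circleMap 0 r 0) := hFTC
    _ = 0 := by rw [hper, sub_self]

/-! ### Pointwise identities -/

lemma pointwise_A (A B : ℕ) (hA : 1 ≤ A) {u z : ℂ} (hw : u + z - 1 ≠ 0) :
    dg A B u z =
      -(A : ℂ) * g (A + 1) B u z + ((2 * (A : ℂ)) * g A B u z + -(A : ℂ) * g (A - 1) B u z) := by
  obtain ⟨a, rfl⟩ : ∃ a, A = a + 1 := ⟨A - 1, (Nat.succ_pred_eq_of_pos hA).symm⟩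
  unfold dg g
  simp only [Nat.add_sub_cancel]
  rw [show ((u + z - 1) ^ 2)⁻¹ = ((u + z - 1)⁻¹) ^ 2 from (inv_pow _ _).symm]
  have key : (1 + (u + z - 1)⁻¹) ^ (a + 1 + 1) - 2 * (1 + (u + z - 1)⁻¹) ^ (a + 1)
      + (1 + (u + z - 1)⁻¹) ^ a = (1 + (u + z - 1)⁻¹) ^ a * ((u + z - 1)⁻¹) ^ 2 := by
    ring
  linear_combination (-((a : ℂ) + 1)) * (1 - z⁻¹) ^ B * key

lemma pointwise_B (A B : ℕ) (hB : 1 ≤ B) {u z : ℂ} (hz : z ≠ 0) :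
    (1 + (u + z - 1)⁻¹) ^ A * ((B : ℂ) * (1 - z⁻¹) ^ (B - 1) * (z ^ 2)⁻¹) =
      (B : ℂ) * g A (B + 1) u z + (-(2 * (B : ℂ)) * g A B u z + (B : ℂ) * g A (B - 1) u z) := by
  obtain ⟨b, rfl⟩ : ∃ b, B = b + 1 := ⟨B - 1, (Nat.succ_pred_eq_of_pos hB).symm⟩
  unfold g
  simp only [Nat.add_sub_cancel]
  rw [show (z ^ 2 : ℂ)⁻¹ = (z⁻¹) ^ 2 from (inv_pow _ _).symm]
  have key : (1 - z⁻¹) ^ (b + 1 + 1) - 2 * (1 - z⁻¹) ^ (b + 1) + (1 - z⁻¹) ^ b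
      = (1 - z⁻¹) ^ b * (z⁻¹) ^ 2 := by
    ring
  linear_combination ((b : ℂ) + 1) * (1 + (u + z - 1)⁻¹) ^ A * key

lemma pointwise_R (a b : ℕ) {u z : ℂ} (hu1 : u ≠ 1) (hz : z ≠ 0) (hw : u + z - 1 ≠ 0) :
    (u - 1) * g (a + 1) (b + 1) u z =
      -(u + 1) * g a b u z + (u * g (a + 1) b u z + u * g a (b + 1) u z) := by
  have hu1' : u - 1 ≠ 0 := sub_ne_zero_of_ne hu1
  have key : (u - 1) * ((1 + (u + z - 1)⁻¹) * (1 - z⁻¹)) =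
      -(u + 1) + (u * (1 + (u + z - 1)⁻¹) + u * (1 - z⁻¹)) := by
    field_simp
    ring
  unfold g
  rw [pow_succ, pow_succ]
  linear_combination ((1 + (u + z - 1)⁻¹) ^ a * (1 - z⁻¹) ^ b) * key

/-! ### Radius independence -/

lemma g_radius (A B : ℕ) {u : ℂ} {r R : ℝ} (h0 : 0 < r) (hle : r ≤ R)
    (hR : R < ‖1 - u‖) :
    (∮ z in C(0, R), g A B u z) = ∮ z in C(0, r), g A B u z := by
  apply Complex.circleIntegral_eq_of_differentiable_on_annulus_off_countable h0 hle
    Set.countable_empty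
  · intro z hz
    obtain ⟨hz1, hz2⟩ := hz
    have hub : ‖z‖ ≤ R := by simpa [Complex.dist_eq] using mem_closedBall.1 hz1
    have hlb : r ≤ ‖z‖ := by
      by_contra h
      exact hz2 (by simpa [Complex.dist_eq] using lt_of_not_ge h)
    have hz0 : z ≠ 0 := by
      intro h; rw [h] at hlb; simp at hlb; exact absurd hlb (not_le.2 h0)
    exact (contAt_g A B hz0 (w_ne (lt_of_le_of_lt hub hR))).continuousWithinAt
  · intro z hz
    obtain ⟨⟨hz1, hz2⟩, -⟩ := hz
    have hub : ‖z‖ < R := by simpa [Complex.dist_eq] using mem_ball.1 hz1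
    have hlb : r < ‖z‖ := by
      by_contra h
      exact hz2 (by simpa [Complex.dist_eq] using not_lt.1 h)
    have hz0 : z ≠ 0 := by
      intro h; rw [h] at hlb; simp at hlb; exact absurd hlb (not_lt.2 h0.le)
    exact (hasDerivAt_gz A B hz0 (w_ne (hub.trans hR))).differentiableAt

lemma f_eq_r (A B : ℕ) {u : ℂ} {r : ℝ} (h0 : 0 < r) (hr : r < ‖1 - u‖) :
    f A B u = (2 * Real.pi * Complex.I)⁻¹ * ∮ z in C(0, r), g A B u z := by
  rw [f_eq]
  congr 1
  have h2 : (0 : ℝ) < ‖1 - u‖ / 2 := by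
    have : (0 : ℝ) < ‖1 - u‖ := h0.trans hr
    linarith
  have h2' : ‖1 - u‖ / 2 < ‖1 - u‖ := by
    have : (0 : ℝ) < ‖1 - u‖ := h0.trans hr
    linarith
  rcases le_total r (‖1 - u‖ / 2) with h | h
  · exact g_radius A B h0 h h2'
  · exact (g_radius A B h2 h hr).symm

lemma f_loc (A B : ℕ) {u₀ : ℂ} (hu : u₀ ≠ 1) :
    ∀ᶠ u in 𝓝 u₀, f A B u =
      (2 * Real.pi * Complex.I)⁻¹ *
        ∮ z in C(0, ‖1 - u₀‖ / 2), g A B u z := by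
  have h1u : (1 : ℂ) - u₀ ≠ 0 := sub_ne_zero_of_ne (Ne.symm hu)
  have hr₀ : 0 < ‖1 - u₀‖ / 2 := by
    have := norm_pos_iff.mpr h1u
    linarith
  filter_upwards [Metric.ball_mem_nhds u₀ hr₀] with u hu'
  have hd : ‖u - u₀‖ < ‖1 - u₀‖ / 2 := by
    simpa [Complex.dist_eq] using mem_ball.1 hu'
  have htri : ‖1 - u₀‖ ≤ ‖1 - u‖ + ‖u - u₀‖ := by
    calc ‖1 - u₀‖ = ‖(1 - u) + (u - u₀)‖ := by ring_nf
      _ ≤ ‖1 - u‖ + ‖u - u₀‖ := norm_add_le _ _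
  exact f_eq_r A B hr₀ (by linarith)

/-! ### The key derivative lemma -/

lemma hasDerivAt_f (A B : ℕ) {u₀ : ℂ} (hu : u₀ ≠ 1) :
    HasDerivAt (f A B)
      ((2 * Real.pi * Complex.I)⁻¹ *
        ∮ z in C(0, ‖1 - u₀‖ / 2), dg A B u₀ z) u₀ := by
  set r₀ : ℝ := ‖1 - u₀‖ / 2 with hr₀def
  have h1u : (1 : ℂ) - u₀ ≠ 0 := sub_ne_zero_of_ne (Ne.symm hu)
  have hr₀ : 0 < r₀ := by
    have := norm_pos_iff.mpr h1u
    rw [hr₀def]; linarith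
  have habs2 : ‖1 - u₀‖ = 2 * r₀ := by rw [hr₀def]; ring
  have hza : ∀ θ : ℝ, ‖circleMap 0 r₀ θ‖ = r₀ := fun θ => by
    simp [norm_circleMap_zero, abs_of_pos hr₀]
  have hz0 : ∀ θ : ℝ, circleMap 0 r₀ θ ≠ 0 := fun θ => z_ne hr₀ (hza θ)
  -- lower bound on |x + z - 1| for x near u₀
  have hwlb : ∀ x ∈ ball u₀ (r₀ / 2), ∀ θ : ℝ,
      r₀ / 2 ≤ ‖x + circleMap 0 r₀ θ - 1‖ := by
    intro x hx θ
    have hdx : ‖x - u₀‖ < r₀ / 2 := by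
      simpa [Complex.dist_eq] using mem_ball.1 hx
    have htri : ‖1 - u₀‖ ≤ ‖x + circleMap 0 r₀ θ - 1‖ +
        (‖x - u₀‖ + ‖circleMap 0 r₀ θ‖) := by
      have h1 : ‖1 - u₀‖ =
          ‖-(x + circleMap 0 r₀ θ - 1) + ((x - u₀) + circleMap 0 r₀ θ)‖ := by
        congr 1
        ring
      calc ‖1 - u₀‖
          = ‖-(x + circleMap 0 r₀ θ - 1) + ((x - u₀) + circleMap 0 r₀ θ)‖ := h1
        _ ≤ ‖-(x + circleMap 0 r₀ θ - 1)‖ + ‖(x - u₀) + circleMap 0 r₀ θ‖ := norm_add_le _ _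
        _ = ‖x + circleMap 0 r₀ θ - 1‖ + ‖(x - u₀) + circleMap 0 r₀ θ‖ := by rw [norm_neg]
        _ ≤ ‖x + circleMap 0 r₀ θ - 1‖ + (‖x - u₀‖ + ‖circleMap 0 r₀ θ‖) :=
            add_le_add le_rfl (norm_add_le _ _)
    rw [habs2, hza θ] at htri
    linarith
  have hwne : ∀ x ∈ ball u₀ (r₀ / 2), ∀ θ : ℝ, x + circleMap 0 r₀ θ - 1 ≠ 0 := by
    intro x hx θ h
    have h2 := hwlb x hx θ
    rw [h] at h2
    simp at h2
    linarith
  set M : ℝ := (A : ℝ) * (1 + (r₀ / 2)⁻¹) ^ (A - 1) * ((r₀ / 2) ^ 2)⁻¹ * (1 + r₀⁻¹) ^ B with hM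
  have hderiv_cont : Continuous fun θ : ℝ => deriv (circleMap 0 r₀) θ := by
    have he : (fun θ : ℝ => deriv (circleMap 0 r₀) θ) = fun θ => circleMap 0 r₀ θ * Complex.I := by
      funext θ; exact deriv_circleMap 0 r₀ θ
    rw [he]; exact (continuous_circleMap 0 r₀).mul continuous_const
  have hmeas : ∀ᶠ x in 𝓝 u₀, AEStronglyMeasurable
      (fun θ : ℝ => deriv (circleMap 0 r₀) θ • g A B x (circleMap 0 r₀ θ))
      (volume.restrict (Set.uIoc (0 : ℝ) (2 * π))) := by
    filter_upwards [Metric.ball_mem_nhds u₀ (half_pos hr₀)] with x hx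
    exact (hderiv_cont.smul (continuous_iff_continuousAt.2 fun θ =>
      (contAt_g A B (hz0 θ) (hwne x hx θ)).comp
        (continuous_circleMap 0 r₀).continuousAt)).aestronglyMeasurable
  have hint : IntervalIntegrable
      (fun θ : ℝ => deriv (circleMap 0 r₀) θ • g A B u₀ (circleMap 0 r₀ θ)) volume 0 (2 * π) :=
    ((contOn_g A B hr₀ (by rw [habs2]; linarith)).circleIntegrable hr₀.le).out
  have h'meas : AEStronglyMeasurable
      (fun θ : ℝ => deriv (circleMap 0 r₀) θ • dg A B u₀ (circleMap 0 r₀ θ))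
      (volume.restrict (Set.uIoc (0 : ℝ) (2 * π))) :=
    (hderiv_cont.smul (continuous_iff_continuousAt.2 fun θ =>
      (contAt_dg A B (hz0 θ) (hwne u₀ (mem_ball_self (half_pos hr₀)) θ)).comp
        (continuous_circleMap 0 r₀).continuousAt)).aestronglyMeasurable
  have hbound : ∀ᵐ θ ∂(volume : Measure ℝ), θ ∈ Set.uIoc (0 : ℝ) (2 * π) →
      ∀ x ∈ ball u₀ (r₀ / 2),
        ‖deriv (circleMap 0 r₀) θ • dg A B x (circleMap 0 r₀ θ)‖ ≤ r₀ * M := by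
    apply Filter.Eventually.of_forall
    intro θ _ x hx
    rw [norm_smul]
    have h1 : ‖deriv (circleMap 0 r₀) θ‖ = r₀ := by
      rw [deriv_circleMap, norm_mul, norm_circleMap_zero,
        Complex.norm_I, mul_one, abs_of_pos hr₀]
    rw [h1]
    apply mul_le_mul_of_nonneg_left _ hr₀.le
    set z := circleMap 0 r₀ θ with hzdef
    set w := x + z - 1 with hwdef
    have hwl : r₀ / 2 ≤ ‖w‖ := hwlb x hx θ
    have hX : ‖(1 : ℂ) + w⁻¹‖ ≤ 1 + (r₀ / 2)⁻¹ := by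
      calc ‖(1 : ℂ) + w⁻¹‖ ≤ ‖(1 : ℂ)‖ + ‖w⁻¹‖ := norm_add_le _ _
        _ = 1 + (‖w‖)⁻¹ := by simp
        _ ≤ 1 + (r₀ / 2)⁻¹ := by gcongr
    have hY : ‖(1 : ℂ) - z⁻¹‖ ≤ 1 + r₀⁻¹ := by
      calc ‖(1 : ℂ) - z⁻¹‖ ≤ ‖(1 : ℂ)‖ + ‖z⁻¹‖ := norm_sub_le _ _
        _ = 1 + (‖z‖)⁻¹ := by simp
        _ = 1 + r₀⁻¹ := by rw [hza θ]
    have hW : ‖(-(w ^ 2)⁻¹ : ℂ)‖ ≤ ((r₀ / 2) ^ 2)⁻¹ := by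
      rw [norm_neg, norm_inv, norm_pow]
      gcongr
    calc ‖dg A B x z‖
        = (A : ℝ) * ‖(1 : ℂ) + w⁻¹‖ ^ (A - 1) * ‖(-(w ^ 2)⁻¹ : ℂ)‖ * ‖(1 : ℂ) - z⁻¹‖ ^ B := by
          unfold dg
          rw [← hwdef, norm_mul, norm_mul, norm_mul, norm_pow, norm_pow]
          simp
      _ ≤ M := by
          rw [hM]
          gcongr <;> first
            | positivity
            | exact hX
            | exact hW
            | exact hY
  have hdiff : ∀ᵐ θ ∂(volume : Measure ℝ), θ ∈ Set.uIoc (0 : ℝ) (2 * π) →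
      ∀ x ∈ ball u₀ (r₀ / 2),
        HasDerivAt (fun u => deriv (circleMap 0 r₀) θ • g A B u (circleMap 0 r₀ θ))
          (deriv (circleMap 0 r₀) θ • dg A B x (circleMap 0 r₀ θ)) x := by
    apply Filter.Eventually.of_forall
    intro θ _ x hx
    exact (hasDerivAt_gu A B (hwne x hx θ)).const_smul (deriv (circleMap 0 r₀) θ)
  have main := (intervalIntegral.hasDerivAt_integral_of_dominated_loc_of_deriv_le
    (F := fun u (θ : ℝ) => deriv (circleMap 0 r₀) θ • g A B u (circleMap 0 r₀ θ))
    (F' := fun u (θ : ℝ) => deriv (circleMap 0 r₀) θ • dg A B u (circleMap 0 r₀ θ))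
    (bound := fun _ => r₀ * M)
    (ball_mem_nhds u₀ (half_pos hr₀)) hmeas hint h'meas hbound intervalIntegrable_const hdiff).2
  refine HasDerivAt.congr_of_eventuallyEq ?_ (f_loc A B hu)
  exact main.const_mul ((2 * Real.pi * Complex.I)⁻¹)

/-! ### Derivative formulas for `f` -/

lemma DA (A B : ℕ) (hA : 1 ≤ A) {u : ℂ} (hu : u ≠ 1) :
    HasDerivAt (f A B)
      (-(A : ℂ) * f (A + 1) B u + ((2 * (A : ℂ)) * f A B u + -(A : ℂ) * f (A - 1) B u)) u := by
  have h1u : (1 : ℂ) - u ≠ 0 := sub_ne_zero_of_ne (Ne.symm hu)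
  have hr₀ : 0 < ‖1 - u‖ / 2 := by
    have := norm_pos_iff.mpr h1u; linarith
  have hrlt : ‖1 - u‖ / 2 < ‖1 - u‖ := by
    have := norm_pos_iff.mpr h1u; linarith
  have h := hasDerivAt_f A B hu
  convert h using 1
  have hcongr : (∮ z in C(0, ‖1 - u‖ / 2), dg A B u z) =
      ∮ z in C(0, ‖1 - u‖ / 2),
        (-(A : ℂ) * g (A + 1) B u z + ((2 * (A : ℂ)) * g A B u z + -(A : ℂ) * g (A - 1) B u z)) := by
    apply circleIntegral.integral_congr hr₀.le
    intro z hzs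
    have hza : ‖z‖ = ‖1 - u‖ / 2 := by
      simpa [Complex.dist_eq] using hzs
    exact pointwise_A A B hA (w_ne' hza hrlt)
  rw [hcongr, split3 hr₀.le _ _ _ (contOn_g (A + 1) B hr₀ hrlt) (contOn_g A B hr₀ hrlt)
    (contOn_g (A - 1) B hr₀ hrlt)]
  rw [f_eq, f_eq, f_eq]
  ring

lemma DB (A B : ℕ) (hB : 1 ≤ B) {u : ℂ} (hu : u ≠ 1) :
    HasDerivAt (f A B)
      (-(B : ℂ) * f A (B + 1) u + ((2 * (B : ℂ)) * f A B u + -(B : ℂ) * f A (B - 1) u)) u := by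
  have h1u : (1 : ℂ) - u ≠ 0 := sub_ne_zero_of_ne (Ne.symm hu)
  have hr₀ : 0 < ‖1 - u‖ / 2 := by
    have := norm_pos_iff.mpr h1u; linarith
  have hrlt : ‖1 - u‖ / 2 < ‖1 - u‖ := by
    have := norm_pos_iff.mpr h1u; linarith
  set r : ℝ := ‖1 - u‖ / 2 with hrdef
  have hza : ∀ θ : ℝ, ‖circleMap 0 r θ‖ = r := fun θ => by
    simp [norm_circleMap_zero, abs_of_pos hr₀]
  -- continuity of the second term of the z-derivative
  have contT : ContinuousOn
      (fun z => (1 + (u + z - 1)⁻¹) ^ A * ((B : ℂ) * (1 - z⁻¹) ^ (B - 1) * (z ^ 2)⁻¹))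
      (sphere (0 : ℂ) r) := by
    intro z hzs
    have hzab : ‖z‖ = r := by simpa [Complex.dist_eq] using hzs
    have hz0 : z ≠ 0 := z_ne hr₀ hzab
    have hw : u + z - 1 ≠ 0 := w_ne' hzab hrlt
    exact (((contAt_X hw).pow A).mul ((continuousAt_const.mul ((contAt_Y hz0).pow (B - 1))).mul
      ((continuousAt_id.pow 2).inv₀ (pow_ne_zero 2 hz0)))).continuousWithinAt
  have ci_dg : CircleIntegrable (dg A B u) 0 r := (contOn_dg A B hr₀ hrlt).circleIntegrable hr₀.le
  have ci_T : CircleIntegrable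
      (fun z => (1 + (u + z - 1)⁻¹) ^ A * ((B : ℂ) * (1 - z⁻¹) ^ (B - 1) * (z ^ 2)⁻¹)) 0 r :=
    contT.circleIntegrable hr₀.le
  -- the integral of the z-derivative vanishes
  have hzero : (∮ z in C(0, r),
      (dg A B u z + (1 + (u + z - 1)⁻¹) ^ A * ((B : ℂ) * (1 - z⁻¹) ^ (B - 1) * (z ^ 2)⁻¹))) = 0 := by
    apply cint_deriv_zero (H := fun z => g A B u z)
    · intro θ
      exact hasDerivAt_gz A B (z_ne hr₀ (hza θ)) (w_ne' (hza θ) hrlt)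
    · exact ci_dg.add ci_T
  have hsum := cint_add ci_dg ci_T
  rw [hsum] at hzero
  have hdg_eq : (∮ z in C(0, r), dg A B u z) =
      -∮ z in C(0, r),
        (1 + (u + z - 1)⁻¹) ^ A * ((B : ℂ) * (1 - z⁻¹) ^ (B - 1) * (z ^ 2)⁻¹) :=
    eq_neg_of_add_eq_zero_left hzero
  have hTcongr : (∮ z in C(0, r),
      (1 + (u + z - 1)⁻¹) ^ A * ((B : ℂ) * (1 - z⁻¹) ^ (B - 1) * (z ^ 2)⁻¹)) =
      ∮ z in C(0, r),
        ((B : ℂ) * g A (B + 1) u z + (-(2 * (B : ℂ)) * g A B u z + (B : ℂ) * g A (B - 1) u z)) := by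
    apply circleIntegral.integral_congr hr₀.le
    intro z hzs
    have hzab : ‖z‖ = r := by simpa [Complex.dist_eq] using hzs
    exact pointwise_B A B hB (z_ne hr₀ hzab)
  have h := hasDerivAt_f A B hu
  convert h using 1
  rw [show ‖1 - u‖ / 2 = r from rfl, hdg_eq, hTcongr,
    split3 hr₀.le _ _ _ (contOn_g A (B + 1) hr₀ hrlt) (contOn_g A B hr₀ hrlt)
      (contOn_g A (B - 1) hr₀ hrlt)]
  rw [f_eq, f_eq, f_eq]
  rw [show ‖1 - u‖ / 2 = r from rfl]
  ring

/-! ### Contiguous relation -/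

lemma relR (a b : ℕ) {u : ℂ} (hu : u ≠ 1) :
    (u - 1) * f (a + 1) (b + 1) u =
      -(u + 1) * f a b u + (u * f (a + 1) b u + u * f a (b + 1) u) := by
  have h1u : (1 : ℂ) - u ≠ 0 := sub_ne_zero_of_ne (Ne.symm hu)
  have hr₀ : 0 < ‖1 - u‖ / 2 := by
    have := norm_pos_iff.mpr h1u; linarith
  have hrlt : ‖1 - u‖ / 2 < ‖1 - u‖ := by
    have := norm_pos_iff.mpr h1u; linarith
  have hcongr : (∮ z in C(0, ‖1 - u‖ / 2), (u - 1) * g (a + 1) (b + 1) u z) =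
      ∮ z in C(0, ‖1 - u‖ / 2),
        (-(u + 1) * g a b u z + (u * g (a + 1) b u z + u * g a (b + 1) u z)) := by
    apply circleIntegral.integral_congr hr₀.le
    intro z hzs
    have hzab : ‖z‖ = ‖1 - u‖ / 2 := by
      simpa [Complex.dist_eq] using hzs
    exact pointwise_R a b hu (z_ne hr₀ hzab) (w_ne' hzab hrlt)
  rw [cint_cmul] at hcongr
  rw [split3 hr₀.le _ _ _ (contOn_g a b hr₀ hrlt) (contOn_g (a + 1) b hr₀ hrlt)
    (contOn_g a (b + 1) hr₀ hrlt)] at hcongr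
  rw [f_eq, f_eq, f_eq, f_eq]
  linear_combination (2 * ↑Real.pi * Complex.I)⁻¹ * hcongr

end Stmt4Aux

/-- Second-derivative identity (\ref{fAB-der-der-1}). -/
theorem stmt4 (A B : ℕ) (hA : 1 ≤ A) (hB : 1 ≤ B) (u : ℂ) (hu0 : u ≠ 0)
    (hu1 : u ≠ 1) (hum1 : u ≠ -1) :
    iteratedDeriv 2 (f A B) u =
      (A : ℂ) * (B : ℂ) *
        ((f (A - 1) B u + f A (B - 1) u) / (u * (u + 1))
          + (f (A + 1) B u + f A (B + 1) u) / (u * (u - 1))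
          - 4 * f A B u / ((u + 1) * (u - 1))) := by
  have hu1' : u - 1 ≠ 0 := sub_ne_zero_of_ne hu1
  have hum1' : u + 1 ≠ 0 := by
    intro h
    exact hum1 (by linear_combination h)
  have eA : A - 1 + 1 = A := Nat.succ_pred_eq_of_pos hA
  have eB : B - 1 + 1 = B := Nat.succ_pred_eq_of_pos hB
  -- second derivative as deriv of deriv
  have h2 : iteratedDeriv 2 (f A B) u = deriv (deriv (f A B)) u := by
    rw [show (2 : ℕ) = 1 + 1 from rfl, iteratedDeriv_succ, iteratedDeriv_one]
  -- first derivative, locally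
  set G : ℂ → ℂ := fun v =>
    -(A : ℂ) * f (A + 1) B v + ((2 * (A : ℂ)) * f A B v + -(A : ℂ) * f (A - 1) B v) with hGdef
  have hGev : deriv (f A B) =ᶠ[nhds u] G := by
    filter_upwards [isOpen_ne.mem_nhds hu1] with v hv
    exact (Stmt4Aux.DA A B hA hv).deriv
  -- derivative of G at u
  have hG : HasDerivAt G
      (-(A : ℂ) * (-(B : ℂ) * f (A + 1) (B + 1) u +
          ((2 * (B : ℂ)) * f (A + 1) B u + -(B : ℂ) * f (A + 1) (B - 1) u)) +
        ((2 * (A : ℂ)) * (-(B : ℂ) * f A (B + 1) u +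
          ((2 * (B : ℂ)) * f A B u + -(B : ℂ) * f A (B - 1) u)) +
         -(A : ℂ) * (-(B : ℂ) * f (A - 1) (B + 1) u +
          ((2 * (B : ℂ)) * f (A - 1) B u + -(B : ℂ) * f (A - 1) (B - 1) u)))) u := by
    exact (((Stmt4Aux.DB (A + 1) B hB hu1).const_mul (-(A : ℂ))).add
      (((Stmt4Aux.DB A B hB hu1).const_mul (2 * (A : ℂ))).add
        ((Stmt4Aux.DB (A - 1) B hB hu1).const_mul (-(A : ℂ)))))
  have hfpp : deriv (deriv (f A B)) u = _ := hGev.deriv_eq.trans hG.deriv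
  rw [h2, hfpp]
  -- contiguous relations
  have R1 := Stmt4Aux.relR A B hu1
  have R2 := Stmt4Aux.relR (A - 1) (B - 1) hu1
  rw [eA, eB] at R2
  have R3 := Stmt4Aux.relR A (B - 1) hu1
  rw [eB] at R3
  have R4 := Stmt4Aux.relR (A - 1) B hu1
  rw [eA] at R4
  -- solve for the corner values
  have hzpp : f (A + 1) (B + 1) u =
      (-(u + 1) * f A B u + (u * f (A + 1) B u + u * f A (B + 1) u)) / (u - 1) := by
    rw [eq_div_iff hu1']
    linear_combination R1
  have hzmm : f (A - 1) (B - 1) u =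
      (u * f A (B - 1) u + u * f (A - 1) B u - (u - 1) * f A B u) / (u + 1) := by
    rw [eq_div_iff hum1']
    linear_combination R2
  have hzpm : f (A + 1) (B - 1) u =
      ((u - 1) * f (A + 1) B u + (u + 1) * f A (B - 1) u - u * f A B u) / u := by
    rw [eq_div_iff hu0]
    linear_combination -R3
  have hzmp : f (A - 1) (B + 1) u =
      ((u - 1) * f A (B + 1) u + (u + 1) * f (A - 1) B u - u * f A B u) / u := by
    rw [eq_div_iff hu0]
    linear_combination -R4
  rw [hzpp, hzmm, hzpm, hzmp]
  field_simp
  ring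
end

section
/- For every nonnegative integer N, every complex u ≠ 1, and every radius r with 0 < r < |1−u|, the contour integral (1/(2πi)) ∮_{|z|=r} (1 + 1/(u+z−1))^N (1 − 1/z)^N (2z + u − 1) dz over the circle of radius r centered at 0 traversed counterclockwise equals −u·N. -/
open Metric Set Finset Real

lemma circleIntegral_finset_sum' {ι : Type*} (s : Finset ι) (f : ι → ℂ → ℂ) {c : ℂ} {R : ℝ}
    (h : ∀ i ∈ s, CircleIntegrable (f i) c R) :
    (∮ z in C(c, R), ∑ i ∈ s, f i z) = ∑ i ∈ s, ∮ z in C(c, R), f i z := by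
  simp only [circleIntegral, smul_sum]
  exact intervalIntegral.integral_finset_sum fun i hi => (h i hi).out

/-- The identity (\ref{id}):
`(1/(2πi)) ∮_{|z|=r} (1 + 1/(u+z−1))^N (1 − 1/z)^N (2z + u − 1) dz = −uN`
for any radius `0 < r < |1−u|`. -/
theorem stmt6 (N : ℕ) (u : ℂ) (hu : u ≠ 1) (r : ℝ) (hr : 0 < r)
    (hr' : r < ‖1 - u‖) :
    (2 * Real.pi * Complex.I)⁻¹ *
      (∮ z in C(0, r),
        (1 + (u + z - 1)⁻¹) ^ N * (1 - z⁻¹) ^ N * (2 * z + u - 1)) =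
    -u * (N : ℂ) := by
  set a : ℂ := 1 - u with ha
  have hsph : ∀ z ∈ sphere (0 : ℂ) r, z ≠ 0 ∧ z - a ≠ 0 := by
    intro z hz
    rw [mem_sphere_zero_iff_norm] at hz
    refine ⟨fun h => ?_, fun h => ?_⟩
    · rw [h, norm_zero] at hz; exact absurd hz.symm (ne_of_gt hr)
    · rw [sub_eq_zero] at h
      rw [h] at hz
      rw [hz] at hr'
      exact absurd hr' (lt_irrefl r)
  set F : ℕ → ℂ → ℂ := fun k z =>
    (N.choose k : ℂ) * (-u) ^ k * ((z * (z - a)) ^ (-(k : ℤ)) * (2 * z - a)) with hF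
  have key : EqOn (fun z : ℂ => (1 + (u + z - 1)⁻¹) ^ N * (1 - z⁻¹) ^ N * (2 * z + u - 1))
      (fun z => ∑ k ∈ Finset.range (N + 1), F k z) (sphere (0 : ℂ) r) := by
    intro z hz
    obtain ⟨hz0, hza⟩ := hsph z hz
    have hua : u + z - 1 = z - a := by rw [ha]; ring
    have hQ : z * (z - a) ≠ 0 := mul_ne_zero hz0 hza
    have e1 : (1 + (u + z - 1)⁻¹) * (1 - z⁻¹) = -(u * (z * (z - a))⁻¹) + 1 := by
      rw [hua]
      field_simp
      ring
    have e2 : 2 * z + u - 1 = 2 * z - a := by rw [ha]; ring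
    have lhs_eq : (1 + (u + z - 1)⁻¹) ^ N * (1 - z⁻¹) ^ N * (2 * z + u - 1)
        = (-(u * (z * (z - a))⁻¹) + 1) ^ N * (2 * z - a) := by
      rw [← mul_pow, e1, e2]
    simp only
    rw [lhs_eq, add_pow, Finset.sum_mul]
    refine Finset.sum_congr rfl fun k hk => ?_
    rw [hF]
    simp only [one_pow, mul_one]
    rw [neg_pow, mul_pow, inv_pow, ← zpow_natCast (z * (z - a)), ← zpow_neg]
    ring
  have hint : ∀ k ∈ Finset.range (N + 1), CircleIntegrable (F k) 0 r := by
    intro k _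
    refine ContinuousOn.circleIntegrable hr.le ?_
    refine ContinuousOn.mul continuousOn_const (ContinuousOn.mul ?_
      ((continuousOn_const.mul continuousOn_id).sub continuousOn_const))
    exact ContinuousOn.zpow₀ (continuousOn_id.mul (continuousOn_id.sub continuousOn_const))
      _ fun z hz => Or.inl (mul_ne_zero (hsph z hz).1 (hsph z hz).2)
  have hzero : ∀ k, k ≠ 1 → (∮ z in C(0, r), F k z) = 0 := by
    intro k hk
    have hk' : (1 : ℂ) - (k : ℂ) ≠ 0 := by
      intro h
      apply hk
      have : (k : ℂ) = 1 := by linear_combination -h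
      exact_mod_cast this
    refine circleIntegral.integral_eq_zero_of_hasDerivWithinAt (f := fun z =>
      (N.choose k : ℂ) * (-u) ^ k * ((1 - (k : ℂ))⁻¹ * (z * (z - a)) ^ ((1 : ℤ) - k))) hr.le ?_
    intro z hz
    obtain ⟨hz0, hza⟩ := hsph z hz
    have hQ : z * (z - a) ≠ 0 := mul_ne_zero hz0 hza
    have hQd : HasDerivAt (fun z : ℂ => z * (z - a)) (2 * z - a) z := by
      have := (hasDerivAt_id z).mul ((hasDerivAt_id z).sub_const a)
      refine this.congr_deriv ?_
      simp only [id, one_mul, mul_one]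
      ring
    have hpow : HasDerivAt (fun z : ℂ => (z * (z - a)) ^ ((1 : ℤ) - k))
        ((((1 : ℤ) - k : ℤ) : ℂ) * (z * (z - a)) ^ ((1 : ℤ) - k - 1) * (2 * z - a)) z :=
      HasDerivAt.comp z (hasDerivAt_zpow ((1 : ℤ) - k) _ (Or.inl hQ)) hQd
    have hda : HasDerivAt (fun z : ℂ =>
        (N.choose k : ℂ) * (-u) ^ k * ((1 - (k : ℂ))⁻¹ * (z * (z - a)) ^ ((1 : ℤ) - k)))
        (F k z) z := by
      have h2 := (hpow.const_mul ((1 - (k : ℂ))⁻¹)).const_mul ((N.choose k : ℂ) * (-u) ^ k)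
      refine h2.congr_deriv ?_
      symm
      rw [hF]
      have e3 : (1 : ℤ) - k - 1 = -(k : ℤ) := by ring
      have e4 : (((1 : ℤ) - k : ℤ) : ℂ) = 1 - (k : ℂ) := by push_cast; ring
      rw [e3, e4]
      simp only
      field_simp
    exact hda.hasDerivWithinAt
  have hone : (∮ z in C(0, r), F 1 z) = (N : ℂ) * (-u) * (2 * Real.pi * Complex.I) := by
    have congr1 : EqOn (F 1) (fun z => ((N : ℂ) * (-u)) * ((z - 0)⁻¹ + (z - a)⁻¹))
        (sphere (0 : ℂ) r) := by
      intro z hz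
      obtain ⟨hz0, hza⟩ := hsph z hz
      rw [hF]
      simp only [Nat.choose_one_right, pow_one, zpow_neg, zpow_one, sub_zero]
      have e5 : z⁻¹ + (z - a)⁻¹ = (2 * z - a) * (z * (z - a))⁻¹ := by
        field_simp
        ring
      rw [e5]
      simp only [Nat.cast_one, zpow_one]
      ring
    rw [circleIntegral.integral_congr hr.le congr1, circleIntegral.integral_const_mul]
    have h0mem : (0 : ℂ) ∉ sphere (0 : ℂ) |r| := by
      simp only [mem_sphere_zero_iff_norm, norm_zero, abs_of_pos hr]
      exact hr.ne
    have hamem : a ∉ sphere (0 : ℂ) |r| := by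
      rw [mem_sphere_zero_iff_norm, abs_of_pos hr] at *
      exact fun h => absurd (h ▸ hr') (lt_irrefl _)
    have i1 : CircleIntegrable (fun z : ℂ => (z - 0)⁻¹) 0 r :=
      circleIntegrable_sub_inv_iff.mpr (Or.inr h0mem)
    have i2 : CircleIntegrable (fun z : ℂ => (z - a)⁻¹) 0 r :=
      circleIntegrable_sub_inv_iff.mpr (Or.inr hamem)
    have e1 : (∮ z in C(0, r), ((z - 0)⁻¹ + (z - a)⁻¹)) =
        (∮ z in C(0, r), (z - 0)⁻¹) + ∮ z in C(0, r), (z - a)⁻¹ := by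
      simp only [circleIntegral, smul_add]
      exact intervalIntegral.integral_add i1.out i2.out
    rw [e1, circleIntegral.integral_sub_center_inv 0 hr.ne']
    have e2 : (∮ z in C(0, r), (z - a)⁻¹) = 0 := by
      refine Complex.circleIntegral_eq_zero_of_differentiable_on_off_countable hr.le
        Set.countable_empty ?_ ?_
      · refine ContinuousOn.inv₀ (continuousOn_id.sub continuousOn_const) fun z hz => ?_
        rw [mem_closedBall_zero_iff] at hz
        intro h
        rw [sub_eq_zero] at h
        rw [← h] at hr'
        linarith
      · intro z hz
        refine DifferentiableAt.inv (differentiableAt_id.sub (differentiableAt_const a)) ?_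
        rw [mem_diff, mem_ball_zero_iff] at hz
        intro h
        rw [sub_eq_zero] at h
        have h2 := hz.1
        rw [← h] at hr'
        linarith
    rw [e2, add_zero]
  rw [circleIntegral.integral_congr hr.le key, circleIntegral_finset_sum' _ _ hint]
  rw [Finset.sum_eq_single 1 (fun k _ hk => hzero k hk) (fun h1 => ?_), hone]
  · rw [mul_comm, mul_inv_cancel_right₀ Complex.two_pi_I_ne_zero]
    ring
  · have hN : N = 0 := by
      rw [Finset.mem_range] at h1
      omega
    rw [hone, hN]
    simp
end

section
/- For every nonnegative integer N, every complex u ≠ 1, and every radius r with 0 < r < |1−u|, the contour integral (1/(2πi)) ∮_{|z|=r} z·(1 + 1/(u+z−1))^N (1 − 1/z)^N dz over the circle of radius r centered at 0 traversed counterclockwise equals ((1−u)/2)·f_{N,N}(u) − u·N/2. -/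
open Complex Metric Finset

theorem circleIntegral_finsetSum7 {ι : Type*} (t : Finset ι) (F : ι → ℂ → ℂ) (c : ℂ) (R : ℝ)
    (h : ∀ i ∈ t, CircleIntegrable (F i) c R) :
    (∮ z in C(c, R), ∑ i ∈ t, F i z) = ∑ i ∈ t, ∮ z in C(c, R), F i z := by
  simp only [circleIntegral, Finset.smul_sum]
  exact intervalIntegral.integral_finset_sum fun i hi => (h i hi).out

theorem expand7 (N : ℕ) (u v z : ℂ) (hv : v = 1 - u) (h0 : z ≠ 0) (h1 : z - v ≠ 0) :
    (1 + (u + z - 1)⁻¹) ^ N * (1 - z⁻¹) ^ N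
      = ∑ k ∈ Finset.range (N+1), (N.choose k : ℂ) * (-u)^k * ((z*(z-v))⁻¹)^k := by
  have h2 : z * (z - v) ≠ 0 := mul_ne_zero h0 h1
  have h3 : u + z - 1 ≠ 0 := by intro h; apply h1; rw [hv]; linear_combination h
  have key : (1 + (u + z - 1)⁻¹) * (1 - z⁻¹) = 1 + (-u) * (z*(z-v))⁻¹ := by
    subst hv; field_simp; ring
  rw [← mul_pow, key, add_comm, add_pow]
  refine Finset.sum_congr rfl fun k hk => ?_
  rw [mul_pow, one_pow]
  ring

theorem sphere_facts7 (v : ℂ) {s : ℝ} (hs : 0 < s) (hs' : s < ‖v‖) {z : ℂ}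
    (hz : z ∈ sphere (0:ℂ) s) : z ≠ 0 ∧ z - v ≠ 0 := by
  rw [mem_sphere_zero_iff_norm] at hz
  constructor
  · intro h; rw [h] at hz; simp at hz; linarith
  · intro h
    have : z = v := by linear_combination h
    rw [this] at hz
    linarith

theorem ball_facts7 (v : ℂ) {s : ℝ} (hs' : s < ‖v‖) {z : ℂ}
    (hz : z ∈ closedBall (0:ℂ) s) : z - v ≠ 0 := by
  rw [mem_closedBall_zero_iff] at hz
  intro h
  have : z = v := by linear_combination h
  rw [this] at hz
  linarith

theorem contX7 (v : ℂ) {s : ℝ} (hs : 0 < s) (hs' : s < ‖v‖) (k : ℕ) :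
    ContinuousOn (fun z : ℂ => ((z*(z-v))⁻¹)^k) (sphere 0 s) := by
  intro z hz
  obtain ⟨h0, h1⟩ := sphere_facts7 v hs hs' hz
  exact (((continuousAt_id.mul (continuousAt_id.sub continuousAt_const)).inv₀
    (mul_ne_zero h0 h1)).pow k).continuousWithinAt

theorem J_eq7 (v : ℂ) {s : ℝ} (hs : 0 < s) (hs' : s < ‖v‖) (k : ℕ) (hk : 2 ≤ k) :
    (∮ z in C(0,s), z * ((z*(z-v))⁻¹)^k) = v/2 * ∮ z in C(0,s), ((z*(z-v))⁻¹)^k := by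
  have hne : (1:ℂ) - (k:ℂ) ≠ 0 := by
    intro h
    have : (k:ℂ) = 1 := by linear_combination -h
    rw [show (1:ℂ) = ((1:ℕ):ℂ) by norm_num, Nat.cast_inj] at this
    omega
  have hzero : (∮ z in C(0,s), (2*z - v) * ((z*(z-v))⁻¹)^k) = 0 := by
    apply circleIntegral.integral_eq_zero_of_hasDerivWithinAt hs.le
      (f := fun z : ℂ => ((1:ℂ) - k)⁻¹ * (z*(z-v)) ^ ((1:ℤ) - k))
    intro z hz
    obtain ⟨h0, h1⟩ := sphere_facts7 v hs hs' hz
    have hB : z * (z - v) ≠ 0 := mul_ne_zero h0 h1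
    have hd1 : HasDerivAt (fun z : ℂ => z * (z - v)) (2*z - v) z := by
      have := (hasDerivAt_id z).mul ((hasDerivAt_id z).sub_const v)
      exact this.congr_deriv (by simp; ring)
    have hd2 := (hasDerivAt_zpow ((1:ℤ) - k) (z*(z-v)) (Or.inl hB)).comp z hd1
    have := (hd2.const_mul (((1:ℂ) - (k:ℂ))⁻¹)).hasDerivWithinAt
      (s := sphere (0:ℂ) s)
    convert this using 1
    · rfl
    have hzb : (z*(z-v)) ^ ((1:ℤ) - k - 1) = ((z*(z-v))⁻¹)^k := by
      rw [show (1:ℤ) - k - 1 = -(k:ℤ) by ring, zpow_neg, zpow_natCast, inv_pow]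
    rw [hzb]
    push_cast
    field_simp
  have h2 : CircleIntegrable (fun z : ℂ => ((z*(z-v))⁻¹)^k) 0 s :=
    (contX7 v hs hs' k).circleIntegrable hs.le
  have e : (fun z : ℂ => (2*z - v) * ((z*(z-v))⁻¹)^k)
      = fun z : ℂ => 2*(z * ((z*(z-v))⁻¹)^k) - v*((z*(z-v))⁻¹)^k := funext fun z => by ring
  rw [e] at hzero
  have hA : CircleIntegrable (fun z : ℂ => 2*(z * ((z*(z-v))⁻¹)^k)) 0 s :=
    (continuousOn_const.mul (continuousOn_id.mul (contX7 v hs hs' k))).circleIntegrable hs.le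
  have hB' : CircleIntegrable (fun z : ℂ => v*((z*(z-v))⁻¹)^k) 0 s :=
    (continuousOn_const.mul (contX7 v hs hs' k)).circleIntegrable hs.le
  rw [circleIntegral.integral_sub hA hB', circleIntegral.integral_const_mul,
    circleIntegral.integral_const_mul] at hzero
  linear_combination hzero / 2

theorem J0_7 (v : ℂ) (s : ℝ) :
    (∮ z in C(0,s), z * ((z*(z-v))⁻¹)^0) = 0 := by
  have := circleIntegral.integral_sub_zpow_of_ne (by decide : (1:ℤ) ≠ -1) (0:ℂ) 0 s
  simpa using this

theorem K0_7 (v : ℂ) (s : ℝ) :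
    (∮ z in C(0,s), ((z*(z-v))⁻¹)^0) = 0 := by
  have := circleIntegral.integral_sub_zpow_of_ne (by decide : (0:ℤ) ≠ -1) (0:ℂ) 0 s
  simpa using this

theorem J1_7 (v : ℂ) {s : ℝ} (hs : 0 < s) (hs' : s < ‖v‖) :
    (∮ z in C(0,s), z * ((z*(z-v))⁻¹)^1) = 0 := by
  have hcongr : (∮ z in C(0,s), z * ((z*(z-v))⁻¹)^1) = ∮ z in C(0,s), (z - v)⁻¹ := by
    apply circleIntegral.integral_congr hs.le
    intro z hz
    obtain ⟨h0, h1⟩ := sphere_facts7 v hs hs' hz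
    field_simp
  rw [hcongr]
  apply circleIntegral_eq_zero_of_differentiable_on_off_countable hs.le Set.countable_empty
  · intro z hz
    exact (ContinuousAt.continuousWithinAt (by
      exact ((continuousAt_id.sub continuousAt_const).inv₀ (ball_facts7 v hs' hz))))
  · intro z hz
    exact (differentiableAt_id.sub_const v).inv (ball_facts7 v hs' (ball_subset_closedBall hz.1))

theorem K1_7 (v : ℂ) (hv : v ≠ 0) {s : ℝ} (hs : 0 < s) (hs' : s < ‖v‖) :
    (∮ z in C(0,s), ((z*(z-v))⁻¹)^1) = v⁻¹ * (-(2 * Real.pi * Complex.I)) := by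
  have hcongr : (∮ z in C(0,s), ((z*(z-v))⁻¹)^1)
      = ∮ z in C(0,s), v⁻¹ * ((z - v)⁻¹ - (z - 0)⁻¹) := by
    apply circleIntegral.integral_congr hs.le
    intro z hz
    obtain ⟨h0, h1⟩ := sphere_facts7 v hs hs' hz
    simp only [sub_zero, pow_one]
    field_simp
    ring
  rw [hcongr, circleIntegral.integral_const_mul]
  have hI1 : (∮ z in C(0,s), (z - v)⁻¹) = 0 := by
    apply circleIntegral_eq_zero_of_differentiable_on_off_countable hs.le Set.countable_empty
    · intro z hz
      exact (ContinuousAt.continuousWithinAt (by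
        exact ((continuousAt_id.sub continuousAt_const).inv₀ (ball_facts7 v hs' hz))))
    · intro z hz
      exact (differentiableAt_id.sub_const v).inv (ball_facts7 v hs' (ball_subset_closedBall hz.1))
  have hI2 : (∮ z in C(0,s), (z - (0:ℂ))⁻¹) = 2 * Real.pi * Complex.I :=
    circleIntegral.integral_sub_inv_of_mem_ball (by simpa using hs)
  have hsub : CircleIntegrable (fun z : ℂ => (z - v)⁻¹) 0 s := by
    apply ContinuousOn.circleIntegrable hs.le
    intro z hz
    exact (ContinuousAt.continuousWithinAt
      ((continuousAt_id.sub continuousAt_const).inv₀ (sphere_facts7 v hs hs' hz).2))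
  have hsub0 : CircleIntegrable (fun z : ℂ => (z - (0:ℂ))⁻¹) 0 s := by
    apply ContinuousOn.circleIntegrable hs.le
    intro z hz
    exact (ContinuousAt.continuousWithinAt
      ((continuousAt_id.sub continuousAt_const).inv₀
        (by simpa using (sphere_facts7 v hs hs' hz).1)))
  rw [circleIntegral.integral_sub hsub hsub0, hI1, hI2]
  ring

theorem key7 (N : ℕ) (u v : ℂ) (hv : v = 1 - u) (hv0 : v ≠ 0) {s : ℝ} (hs : 0 < s)
    (hs' : s < ‖v‖) :
    (∮ z in C(0,s), z * ((1 + (u + z - 1)⁻¹)^N * (1 - z⁻¹)^N))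
      = v/2 * (∮ z in C(0,s), (1 + (u + z - 1)⁻¹)^N * (1 - z⁻¹)^N)
        + (-u * N) * (Real.pi * Complex.I) := by
  have hcongr1 : (∮ z in C(0,s), z * ((1 + (u + z - 1)⁻¹)^N * (1 - z⁻¹)^N))
      = ∮ z in C(0,s), ∑ k ∈ Finset.range (N+1),
          (N.choose k : ℂ) * (-u)^k * (z * ((z*(z-v))⁻¹)^k) := by
    apply circleIntegral.integral_congr hs.le
    intro z hz
    obtain ⟨h0, h1⟩ := sphere_facts7 v hs hs' hz
    simp only
    rw [expand7 N u v z hv h0 h1, Finset.mul_sum]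
    exact Finset.sum_congr rfl fun k _ => by ring
  have hcongr2 : (∮ z in C(0,s), (1 + (u + z - 1)⁻¹)^N * (1 - z⁻¹)^N)
      = ∮ z in C(0,s), ∑ k ∈ Finset.range (N+1),
          (N.choose k : ℂ) * (-u)^k * ((z*(z-v))⁻¹)^k := by
    apply circleIntegral.integral_congr hs.le
    intro z hz
    obtain ⟨h0, h1⟩ := sphere_facts7 v hs hs' hz
    exact expand7 N u v z hv h0 h1
  rw [hcongr1, hcongr2]
  have hsum1 := circleIntegral_finsetSum7 (Finset.range (N+1))
    (fun k z => (N.choose k : ℂ) * (-u)^k * (z * ((z*(z-v))⁻¹)^k)) 0 s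
    (fun k _ => (continuousOn_const.mul
      (continuousOn_id.mul (contX7 v hs hs' k))).circleIntegrable hs.le)
  have hsum2 := circleIntegral_finsetSum7 (Finset.range (N+1))
    (fun k z => (N.choose k : ℂ) * (-u)^k * ((z*(z-v))⁻¹)^k) 0 s
    (fun k _ => (continuousOn_const.mul (contX7 v hs hs' k)).circleIntegrable hs.le)
  rw [hsum1, hsum2]
  have hterm : ∀ k ∈ Finset.range (N+1),
      (∮ z in C(0,s), (N.choose k : ℂ) * (-u)^k * (z * ((z*(z-v))⁻¹)^k))
        = v/2 * (∮ z in C(0,s), (N.choose k : ℂ) * (-u)^k * ((z*(z-v))⁻¹)^k)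
          + (if k = 1 then (-u * N) * (Real.pi * Complex.I) else 0) := by
    intro k hk
    rw [circleIntegral.integral_const_mul, circleIntegral.integral_const_mul]
    match k with
    | 0 => rw [J0_7 v s, K0_7 v s]; simp
    | 1 =>
      rw [J1_7 v hs hs', K1_7 v hv0 hs hs']
      have hN : 1 ≤ N := by
        have := Finset.mem_range.1 hk; omega
      simp only [Nat.choose_one_right, pow_one, if_pos]
      field_simp
      ring
    | (m+2) =>
      rw [J_eq7 v hs hs' (m+2) (by omega)]
      simp only [if_neg (by omega : ¬ m+2 = 1), add_zero]
      ring
  rw [Finset.sum_congr rfl hterm, Finset.sum_add_distrib, ← Finset.mul_sum]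
  congr 1
  rw [Finset.sum_ite_eq' (Finset.range (N+1)) 1
    (fun _ => (-u * (N:ℂ)) * ((Real.pi : ℂ) * Complex.I))]
  rcases Nat.eq_zero_or_pos N with hN | hN
  · subst hN; simp
  · rw [if_pos (Finset.mem_range.2 (by omega))]

theorem radius_indep7 (N : ℕ) (u v : ℂ) (hv : v = 1 - u) {a b : ℝ} (ha : 0 < a) (hab : a ≤ b)
    (hb : b < ‖v‖) :
    (∮ z in C(0,b), (1 + (u + z - 1)⁻¹)^N * (1 - z⁻¹)^N)
      = ∮ z in C(0,a), (1 + (u + z - 1)⁻¹)^N * (1 - z⁻¹)^N := by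
  have hdiff : ∀ z : ℂ, z ≠ 0 → u + z - 1 ≠ 0 →
      DifferentiableAt ℂ (fun z : ℂ => (1 + (u + z - 1)⁻¹)^N * (1 - z⁻¹)^N) z := by
    intro z h0 h1
    have d1 : DifferentiableAt ℂ (fun z : ℂ => u + z - 1) z :=
      (differentiableAt_id.const_add u).sub_const 1
    exact (((differentiableAt_const 1).add (d1.inv h1)).pow N).mul
      (((differentiableAt_const 1).sub (differentiableAt_id.inv h0)).pow N)
  have hfacts : ∀ z : ℂ, z ∈ closedBall (0:ℂ) b \ ball (0:ℂ) a → z ≠ 0 ∧ u + z - 1 ≠ 0 := by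
    intro z hz
    have h0 : z ≠ 0 := by
      intro h
      have := hz.2
      rw [h] at this
      exact this (mem_ball_self ha)
    refine ⟨h0, ?_⟩
    have h1 := ball_facts7 v hb hz.1
    intro h
    apply h1
    rw [hv]
    linear_combination h
  apply circleIntegral_eq_of_differentiable_on_annulus_off_countable ha hab Set.countable_empty
  · intro z hz
    obtain ⟨h0, h1⟩ := hfacts z hz
    exact (hdiff z h0 h1).continuousAt.continuousWithinAt
  · intro z hz
    obtain ⟨h0, h1⟩ := hfacts z ⟨ball_subset_closedBall hz.1.1,
      fun hm => hz.1.2 (ball_subset_closedBall hm)⟩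
    exact hdiff z h0 h1

/-- `(1/(2πi)) ∮ z (1 + 1/(u+z−1))^N (1 − 1/z)^N dz = ((1−u)/2) f_{N,N}(u) − uN/2`. -/
theorem stmt7 (N : ℕ) (u : ℂ) (hu : u ≠ 1) (r : ℝ) (hr : 0 < r)
    (hr' : r < ‖1 - u‖) :
    (2 * Real.pi * Complex.I)⁻¹ *
      (∮ z in C(0, r), z * ((1 + (u + z - 1)⁻¹) ^ N * (1 - z⁻¹) ^ N)) =
    ((1 - u) / 2) * f N N u - u * (N : ℂ) / 2 := by
  have hv0 : (1 : ℂ) - u ≠ 0 := sub_ne_zero.2 (Ne.symm hu)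
  have habs : 0 < ‖1 - u‖ := norm_pos_iff.mpr hv0
  set ρ := ‖1 - u‖ / 2 with hρdef
  have hρ : 0 < ρ := by positivity
  have hρ' : ρ < ‖1 - u‖ := by
    rw [hρdef]; linarith
  have hkey := key7 N u (1 - u) rfl hv0 hr hr'
  have hind : (∮ z in C(0,r), (1 + (u + z - 1)⁻¹)^N * (1 - z⁻¹)^N)
      = ∮ z in C(0,ρ), (1 + (u + z - 1)⁻¹)^N * (1 - z⁻¹)^N := by
    rcases le_total r ρ with h | h
    · exact (radius_indep7 N u (1 - u) rfl hr h hρ').symm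
    · exact radius_indep7 N u (1 - u) rfl hρ h hr'
  rw [hkey, hind, f, ← hρdef]
  have hπ : (Real.pi : ℂ) ≠ 0 := Complex.ofReal_ne_zero.2 Real.pi_ne_zero
  have hI : Complex.I ≠ 0 := Complex.I_ne_zero
  generalize (∮ z in C(0,ρ), (1 + (u + z - 1)⁻¹)^N * (1 - z⁻¹)^N) = A
  have h2πI : (2 * (Real.pi:ℂ) * Complex.I)⁻¹ * ((Real.pi:ℂ) * Complex.I) = 1/2 := by
    field_simp
  linear_combination (-u * (N:ℂ)) * h2πI
end

section
/- For every integer N ≥ 1 and every complex u with u ∉ {0, 1, −1}, the function u ↦ f_{N,N}(u) satisfies the second-order linear differential equation f''_{N,N}(u) + (4N/(u²−1))·f'_{N,N}(u) − (2N/(u(u²−1)))·f_{N,N}(u) = 0, where f'_{N,N} and f''_{N,N} denote the first and second derivatives of u ↦ f_{N,N}(u). -/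
open Complex Metric Set Filter MeasureTheory Topology

noncomputable def Gf (N : ℕ) (v z : ℂ) : ℂ := (1 + (v + z - 1)⁻¹) ^ N * (1 - z⁻¹) ^ N

noncomputable def Gu (N : ℕ) (v z : ℂ) : ℂ :=
  -(N : ℂ) * (1 + (v + z - 1)⁻¹) ^ (N - 1) * ((v + z - 1)⁻¹) ^ 2 * (1 - z⁻¹) ^ N

noncomputable def Guu (N : ℕ) (v z : ℂ) : ℂ :=
  (N : ℂ) * ((N : ℂ) - 1) * (1 + (v + z - 1)⁻¹) ^ (N - 2) * ((v + z - 1)⁻¹) ^ 4 * (1 - z⁻¹) ^ N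
  + 2 * (N : ℂ) * (1 + (v + z - 1)⁻¹) ^ (N - 1) * ((v + z - 1)⁻¹) ^ 3 * (1 - z⁻¹) ^ N

noncomputable def Hc (N : ℕ) (u z : ℂ) : ℂ :=
  -(N : ℂ) * (u * (u ^ 2 - 1))⁻¹ * (2 * z + 3 * u - 1) * ((u + z) ^ (N - 1)
    * (((u + z - 1)⁻¹) ^ (N + 1) * ((z - 1) ^ (N + 1) * (z⁻¹) ^ (N - 1))))

lemma hasDerivAt_Gf (N : ℕ) (z : ℂ) {v : ℂ} (hw : v + z - 1 ≠ 0) :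
    HasDerivAt (fun v => Gf N v z) (Gu N v z) v := by
  have h := ((((hasDerivAt_id v).add_const z).sub_const 1).inv hw).const_add 1
  have h2 := (h.pow N).mul_const ((1 - z⁻¹) ^ N)
  have h3 := h2.congr_of_eventuallyEq (f₁ := fun v => Gf N v z)
    (Filter.Eventually.of_forall (fun x => by unfold Gf; simp only [id_eq, Pi.pow_apply, Pi.inv_apply]))
  refine h3.congr_deriv (Eq.symm ?_)
  unfold Gu
  simp only [id_eq, Pi.pow_apply, Pi.mul_apply, Pi.inv_apply, div_eq_mul_inv, ← inv_pow]
  ring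

lemma hasDerivAt_Gu (N : ℕ) (hN : 1 ≤ N) (z : ℂ) {v : ℂ} (hw : v + z - 1 ≠ 0) :
    HasDerivAt (fun v => Gu N v z) (Guu N v z) v := by
  have hinner := (((hasDerivAt_id v).add_const z).sub_const 1).inv hw
  have h1 := (hinner.const_add 1).pow (N - 1)
  have h2 := hinner.pow 2
  have h := (((h1.mul h2).const_mul (-(N : ℂ))).mul_const ((1 - z⁻¹) ^ N))
  have h3 := h.congr_of_eventuallyEq (f₁ := fun v => Gu N v z)
    (Filter.Eventually.of_forall (fun x => by unfold Gu; simp only [id_eq, Pi.pow_apply, Pi.mul_apply, Pi.inv_apply]; ring))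
  refine h3.congr_deriv (Eq.symm ?_)
  unfold Guu
  have e1 : N - 1 - 1 = N - 2 := by omega
  have e2 : ((N - 1 : ℕ) : ℂ) = (N : ℂ) - 1 := by
    push_cast [Nat.cast_sub hN]; ring
  rw [e1, e2]
  simp only [id_eq, Pi.pow_apply, Pi.mul_apply, Pi.inv_apply, div_eq_mul_inv, ← inv_pow]
  ring

set_option maxHeartbeats 4000000 in
set_option maxRecDepth 16000 in
lemma hasDerivAt_Hc (N : ℕ) (hN : 1 ≤ N) {u z : ℂ} (hu0 : u ≠ 0) (hu1 : u ≠ 1)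
    (hum1 : u ≠ -1) (hz : z ≠ 0) (hw : u + z - 1 ≠ 0) :
    HasDerivAt (fun z => Hc N u z)
      (Guu N u z + (4 * (N : ℂ) / (u ^ 2 - 1)) * Gu N u z
        - (2 * (N : ℂ) / (u * (u ^ 2 - 1))) * Gf N u z) z := by
  have hu1' : u - 1 ≠ 0 := sub_ne_zero.mpr hu1
  have hum1' : u + 1 ≠ 0 := by intro h; apply hum1; linear_combination h
  have hu2 : u ^ 2 - 1 ≠ 0 := by
    intro h; apply hu1'
    rcases mul_eq_zero.mp (show (u - 1) * (u + 1) = 0 by linear_combination h) with h' | h'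
    · exact h'
    · exact absurd h' hum1'
  have hL : HasDerivAt (fun z : ℂ => 2 * z + 3 * u - 1) (2 : ℂ) z := by
    simpa using (((hasDerivAt_id z).const_mul (2:ℂ)).add_const (3*u)).sub_const 1
  have hA := ((hasDerivAt_id z).const_add u).pow (N - 1)
  have hB := (((hasDerivAt_id z).const_add u).sub_const 1).inv hw |>.pow (N + 1)
  have hC := ((hasDerivAt_id z).sub_const 1).pow (N + 1)
  have hD := ((hasDerivAt_id z).inv hz).pow (N - 1)
  have hall := (hL.mul (hA.mul (hB.mul (hC.mul hD)))).const_mul (-(N : ℂ) * (u * (u ^ 2 - 1))⁻¹)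
  have h3 := hall.congr_of_eventuallyEq (f₁ := fun z => Hc N u z)
    (Filter.Eventually.of_forall (fun x => by unfold Hc; simp only [id_eq, Pi.pow_apply, Pi.mul_apply, Pi.inv_apply]; ring))
  refine h3.congr_deriv (Eq.symm ?_)
  have hVi : (u ^ 2 - 1)⁻¹ = u * (u * (u ^ 2 - 1))⁻¹ := by
    rw [mul_inv, ← mul_assoc, mul_inv_cancel₀ hu0, one_mul]
  have hP : (1 + (u + z - 1)⁻¹) = (u + z) * (u + z - 1)⁻¹ := by field_simp; ring
  have hQ : (1 - z⁻¹) = (z - 1) * z⁻¹ := by field_simp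
  have hWrel : (u + z - 1) * (u + z - 1)⁻¹ = 1 := mul_inv_cancel₀ hw
  have hZrel : z * z⁻¹ = 1 := mul_inv_cancel₀ hz
  have hUrel : u * (u ^ 2 - 1) * (u * (u ^ 2 - 1))⁻¹ = 1 :=
    mul_inv_cancel₀ (mul_ne_zero hu0 hu2)
  simp only [id_eq, Pi.pow_apply, Pi.mul_apply, Pi.inv_apply, div_eq_mul_inv, ← inv_pow]
  unfold Gf Gu Guu
  rw [hVi, hP, hQ]
  simp only [mul_pow]
  obtain ⟨M, rfl⟩ : ∃ M, N = M + 1 := ⟨N - 1, by omega⟩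
  rcases M with _ | K
  · simp only [zero_add, Nat.sub_self, pow_zero, pow_one, Nat.cast_one, Nat.cast_ofNat,
      Nat.add_sub_cancel]
    push_cast
    generalize (u + z - 1)⁻¹ = W at hWrel ⊢
    generalize z⁻¹ = Zi at hZrel ⊢
    generalize (u * (u ^ 2 - 1))⁻¹ = Ui at hUrel ⊢
    linear_combination (-6*W*Ui - 6*W^2*Ui + 6*z*W*Ui + 4*z*W*Zi*Ui + 12*z*W^2*Ui + 4*z*W^2*Zi*Ui - 4*z^2*W*Zi*Ui - 6*z^2*W^2*Ui - 6*z^2*W^2*Zi*Ui + 2*z^3*W^2*Zi*Ui - 2*u*W*Zi*Ui - 2*u*W^2*Zi*Ui + 2*u*z*W*Zi*Ui + 4*u*z*W^2*Zi*Ui - 2*u*z^2*W^2*Zi*Ui - 2*u^2*W^2*Zi*Ui + 2*u^2*z*W^2*Zi*Ui) * hWrel + (6*W*Ui + 8*W^2*Ui + 4*W^3*Ui - 6*z*W*Ui - 14*z*W^2*Ui - 10*z*W^3*Ui + 6*z^2*W^2*Ui + 8*z^2*W^3*Ui - 2*z^3*W^3*Ui) * hZrel + (2*W^3*Zi - 2*z*W^3*Zi)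 * hUrel
  · have e1 : K + 1 + 1 - 1 = K + 1 := by omega
    have e2 : K + 1 + 1 - 2 = K := by omega
    have e6 : K + 1 - 1 = K := by omega
    simp only [e1, e2, e6]
    push_cast
    generalize (u * (u ^ 2 - 1))⁻¹ = Ui at hUrel ⊢
    simp only [pow_succ]
    generalize (u + z) ^ K = a
    generalize ((u + z - 1)⁻¹) ^ K = b
    generalize (z - 1) ^ K = c
    generalize (z⁻¹) ^ K = d
    generalize (u + z - 1)⁻¹ = W at hWrel ⊢
    generalize z⁻¹ = Zi at hZrel ⊢
    linear_combination (18*W*Zi*Ui*a*b*c*d + 15*W*Zi*Ui*(K:ℂ)*a*b*c*d + 3*W*Zi*Ui*(K:ℂ)^2*a*b*c*d + 20*W^2*Zi*Ui*a*b*c*d + 14*W^2*Zi*Ui*(K:ℂ)*a*b*c*d + 2*W^2*Zi*Ui*(K:ℂ)^2*a*b*c*d + 12*W^3*Zi*Ui*a*b*c*d + 10*W^3*Zi*Ui*(K:ℂ)*a*b*c*d + 2*W^3*Zi*Ui*(K:ℂ)^2*a*b*c*d - 36*z*W*Zi*Ui*a*b*c*d - 30*z*W*Zi*Ui*(K:ℂ)*a*b*c*d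 - 6*z*W*Zi*Ui*(K:ℂ)^2*a*b*c*d - 18*z*W*Zi^2*Ui*a*b*c*d - 15*z*W*Zi^2*Ui*(K:ℂ)*a*b*c*d - 3*z*W*Zi^2*Ui*(K:ℂ)^2*a*b*c*d - 36*z*W^2*Zi*Ui*a*b*c*d - 22*z*W^2*Zi*Ui*(K:ℂ)*a*b*c*d - 2*z*W^2*Zi*Ui*(K:ℂ)^2*a*b*c*d - 20*z*W^2*Zi^2*Ui*a*b*c*d - 14*z*W^2*Zi^2*Ui*(K:ℂ)*a*b*c*d - 2*z*W^2*Zi^2*Ui*(K:ℂ)^2*a*b*c*d - 24*z*W^3*Zi*Ui*a*b*c*d - 20*z*W^3*Zi*Ui*(K:ℂ)*a*b*c*d - 4*z*W^3*Zi*Ui*(K:ℂ)^2*a*b*c*d - 12*z*W^3*Zi^2*Ui*a*b*c*d - 10*z*W^3*Zi^2*Ui*(K:ℂ)*a*b*c*d - 2*z*W^3*Zi^2*Ui*(K:ℂ)^2*a*b*c*d + 18*z^2*W*Zi*Ui*a*b*c*d + 15*z^2*W*Zi*Ui*(K:ℂ)*a*b*c*d + 3*z^2*W*Zi*Ui*(K:ℂ)^2*a*b*c*d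 + 36*z^2*W*Zi^2*Ui*a*b*c*d + 30*z^2*W*Zi^2*Ui*(K:ℂ)*a*b*c*d + 6*z^2*W*Zi^2*Ui*(K:ℂ)^2*a*b*c*d + 12*z^2*W^2*Zi*Ui*a*b*c*d + 2*z^2*W^2*Zi*Ui*(K:ℂ)*a*b*c*d - 2*z^2*W^2*Zi*Ui*(K:ℂ)^2*a*b*c*d + 40*z^2*W^2*Zi^2*Ui*a*b*c*d + 24*z^2*W^2*Zi^2*Ui*(K:ℂ)*a*b*c*d + 2*z^2*W^2*Zi^2*Ui*(K:ℂ)^2*a*b*c*d + 30*z^2*W^3*Zi^2*Ui*a*b*c*d + 25*z^2*W^3*Zi^2*Ui*(K:ℂ)*a*b*c*d + 5*z^2*W^3*Zi^2*Ui*(K:ℂ)^2*a*b*c*d - 18*z^3*W*Zi^2*Ui*a*b*c*d - 15*z^3*W*Zi^2*Ui*(K:ℂ)*a*b*c*d - 3*z^3*W*Zi^2*Ui*(K:ℂ)^2*a*b*c*d + 4*z^3*W^2*Zi*Ui*a*b*c*d + 6*z^3*W^2*Zi*Ui*(K:ℂ)*a*b*c*d + 2*z^3*W^2*Zi*Ui*(K:ℂ)^2*a*b*c*d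 - 20*z^3*W^2*Zi^2*Ui*a*b*c*d - 6*z^3*W^2*Zi^2*Ui*(K:ℂ)*a*b*c*d + 2*z^3*W^2*Zi^2*Ui*(K:ℂ)^2*a*b*c*d + 24*z^3*W^3*Zi*Ui*a*b*c*d + 20*z^3*W^3*Zi*Ui*(K:ℂ)*a*b*c*d + 4*z^3*W^3*Zi*Ui*(K:ℂ)^2*a*b*c*d - 24*z^3*W^3*Zi^2*Ui*a*b*c*d - 20*z^3*W^3*Zi^2*Ui*(K:ℂ)*a*b*c*d - 4*z^3*W^3*Zi^2*Ui*(K:ℂ)^2*a*b*c*d - 4*z^4*W^2*Zi^2*Ui*(K:ℂ)*a*b*c*d - 2*z^4*W^2*Zi^2*Ui*(K:ℂ)^2*a*b*c*d - 12*z^4*W^3*Zi*Ui*a*b*c*d - 10*z^4*W^3*Zi*Ui*(K:ℂ)*a*b*c*d - 2*z^4*W^3*Zi*Ui*(K:ℂ)^2*a*b*c*d + 6*z^4*W^3*Zi^2*Ui*a*b*c*d + 5*z^4*W^3*Zi^2*Ui*(K:ℂ)*a*b*c*d + z^4*W^3*Zi^2*Ui*(K:ℂ)^2*a*b*c*d +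 18*u*W^2*Zi*Ui*a*b*c*d + 15*u*W^2*Zi*Ui*(K:ℂ)*a*b*c*d + 3*u*W^2*Zi*Ui*(K:ℂ)^2*a*b*c*d + 18*u*W^3*Zi*Ui*a*b*c*d + 15*u*W^3*Zi*Ui*(K:ℂ)*a*b*c*d + 3*u*W^3*Zi*Ui*(K:ℂ)^2*a*b*c*d + 2*u*W^3*Zi^2*Ui*a*b*c*d + 3*u*W^3*Zi^2*Ui*(K:ℂ)*a*b*c*d + u*W^3*Zi^2*Ui*(K:ℂ)^2*a*b*c*d - 36*u*z*W^2*Zi*Ui*a*b*c*d - 30*u*z*W^2*Zi*Ui*(K:ℂ)*a*b*c*d - 6*u*z*W^2*Zi*Ui*(K:ℂ)^2*a*b*c*d - 10*u*z*W^2*Zi^2*Ui*a*b*c*d - 11*u*z*W^2*Zi^2*Ui*(K:ℂ)*a*b*c*d - 3*u*z*W^2*Zi^2*Ui*(K:ℂ)^2*a*b*c*d - 54*u*z*W^3*Zi*Ui*a*b*c*d - 45*u*z*W^3*Zi*Ui*(K:ℂ)*a*b*c*d - 9*u*z*W^3*Zi*Ui*(K:ℂ)^2*a*b*c*d - 10*u*z*W^3*Zi^2*Ui*a*b*c*d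 - 11*u*z*W^3*Zi^2*Ui*(K:ℂ)*a*b*c*d - 3*u*z*W^3*Zi^2*Ui*(K:ℂ)^2*a*b*c*d + 18*u*z^2*W^2*Zi*Ui*a*b*c*d + 15*u*z^2*W^2*Zi*Ui*(K:ℂ)*a*b*c*d + 3*u*z^2*W^2*Zi*Ui*(K:ℂ)^2*a*b*c*d + 20*u*z^2*W^2*Zi^2*Ui*a*b*c*d + 22*u*z^2*W^2*Zi^2*Ui*(K:ℂ)*a*b*c*d + 6*u*z^2*W^2*Zi^2*Ui*(K:ℂ)^2*a*b*c*d + 54*u*z^2*W^3*Zi*Ui*a*b*c*d + 45*u*z^2*W^3*Zi*Ui*(K:ℂ)*a*b*c*d + 9*u*z^2*W^3*Zi*Ui*(K:ℂ)^2*a*b*c*d + 14*u*z^2*W^3*Zi^2*Ui*a*b*c*d + 13*u*z^2*W^3*Zi^2*Ui*(K:ℂ)*a*b*c*d + 3*u*z^2*W^3*Zi^2*Ui*(K:ℂ)^2*a*b*c*d - 10*u*z^3*W^2*Zi^2*Ui*a*b*c*d - 11*u*z^3*W^2*Zi^2*Ui*(K:ℂ)*a*b*c*d - 3*u*z^3*W^2*Zi^2*Ui*(K:ℂ)^2*a*b*c*d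 - 18*u*z^3*W^3*Zi*Ui*a*b*c*d - 15*u*z^3*W^3*Zi*Ui*(K:ℂ)*a*b*c*d - 3*u*z^3*W^3*Zi*Ui*(K:ℂ)^2*a*b*c*d - 6*u*z^3*W^3*Zi^2*Ui*a*b*c*d - 5*u*z^3*W^3*Zi^2*Ui*(K:ℂ)*a*b*c*d - u*z^3*W^3*Zi^2*Ui*(K:ℂ)^2*a*b*c*d + 4*u^2*W^2*Zi^2*Ui*a*b*c*d + 2*u^2*W^2*Zi^2*Ui*(K:ℂ)*a*b*c*d + 6*u^2*W^3*Zi^2*Ui*a*b*c*d + 5*u^2*W^3*Zi^2*Ui*(K:ℂ)*a*b*c*d + u^2*W^3*Zi^2*Ui*(K:ℂ)^2*a*b*c*d - 8*u^2*z*W^2*Zi^2*Ui*a*b*c*d - 4*u^2*z*W^2*Zi^2*Ui*(K:ℂ)*a*b*c*d - 12*u^2*z*W^3*Zi^2*Ui*a*b*c*d - 10*u^2*z*W^3*Zi^2*Ui*(K:ℂ)*a*b*c*d - 2*u^2*z*W^3*Zi^2*Ui*(K:ℂ)^2*a*b*c*d + 4*u^2*z^2*W^2*Zi^2*Ui*a*b*c*d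 + 2*u^2*z^2*W^2*Zi^2*Ui*(K:ℂ)*a*b*c*d + 6*u^2*z^2*W^3*Zi^2*Ui*a*b*c*d + 5*u^2*z^2*W^3*Zi^2*Ui*(K:ℂ)*a*b*c*d + u^2*z^2*W^3*Zi^2*Ui*(K:ℂ)^2*a*b*c*d + 4*u^3*W^3*Zi^2*Ui*a*b*c*d + 2*u^3*W^3*Zi^2*Ui*(K:ℂ)*a*b*c*d - 8*u^3*z*W^3*Zi^2*Ui*a*b*c*d - 4*u^3*z*W^3*Zi^2*Ui*(K:ℂ)*a*b*c*d + 4*u^3*z^2*W^3*Zi^2*Ui*a*b*c*d + 2*u^3*z^2*W^3*Zi^2*Ui*(K:ℂ)*a*b*c*d) * hWrel + (-18*W*Zi*Ui*a*b*c*d - 15*W*Zi*Ui*(K:ℂ)*a*b*c*d - 3*W*Zi*Ui*(K:ℂ)^2*a*b*c*d - 38*W^2*Zi*Ui*a*b*c*d - 29*W^2*Zi*Ui*(K:ℂ)*a*b*c*d - 5*W^2*Zi*Ui*(K:ℂ)^2*a*b*c*d - 34*W^3*Zi*Ui*a*b*c*d - 27*W^3*Zi*Ui*(K:ℂ)*a*b*c*d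 - 5*W^3*Zi*Ui*(K:ℂ)^2*a*b*c*d - 12*W^4*Zi*Ui*a*b*c*d - 10*W^4*Zi*Ui*(K:ℂ)*a*b*c*d - 2*W^4*Zi*Ui*(K:ℂ)^2*a*b*c*d + 36*z*W*Zi*Ui*a*b*c*d + 30*z*W*Zi*Ui*(K:ℂ)*a*b*c*d + 6*z*W*Zi*Ui*(K:ℂ)^2*a*b*c*d + 90*z*W^2*Zi*Ui*a*b*c*d + 67*z*W^2*Zi*Ui*(K:ℂ)*a*b*c*d + 11*z*W^2*Zi*Ui*(K:ℂ)^2*a*b*c*d + 100*z*W^3*Zi*Ui*a*b*c*d + 78*z*W^3*Zi*Ui*(K:ℂ)*a*b*c*d + 14*z*W^3*Zi*Ui*(K:ℂ)^2*a*b*c*d + 42*z*W^4*Zi*Ui*a*b*c*d + 35*z*W^4*Zi*Ui*(K:ℂ)*a*b*c*d + 7*z*W^4*Zi*Ui*(K:ℂ)^2*a*b*c*d - 18*z^2*W*Zi*Ui*a*b*c*d - 15*z^2*W*Zi*Ui*(K:ℂ)*a*b*c*d - 3*z^2*W*Zi*Ui*(K:ℂ)^2*a*b*c*d - 66*z^2*W^2*Zi*Ui*a*b*c*d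 - 47*z^2*W^2*Zi*Ui*(K:ℂ)*a*b*c*d - 7*z^2*W^2*Zi*Ui*(K:ℂ)^2*a*b*c*d - 102*z^2*W^3*Zi*Ui*a*b*c*d - 77*z^2*W^3*Zi*Ui*(K:ℂ)*a*b*c*d - 13*z^2*W^3*Zi*Ui*(K:ℂ)^2*a*b*c*d - 54*z^2*W^4*Zi*Ui*a*b*c*d - 45*z^2*W^4*Zi*Ui*(K:ℂ)*a*b*c*d - 9*z^2*W^4*Zi*Ui*(K:ℂ)^2*a*b*c*d + 14*z^3*W^2*Zi*Ui*a*b*c*d + 9*z^3*W^2*Zi*Ui*(K:ℂ)*a*b*c*d + z^3*W^2*Zi*Ui*(K:ℂ)^2*a*b*c*d + 40*z^3*W^3*Zi*Ui*a*b*c*d + 28*z^3*W^3*Zi*Ui*(K:ℂ)*a*b*c*d + 4*z^3*W^3*Zi*Ui*(K:ℂ)^2*a*b*c*d + 30*z^3*W^4*Zi*Ui*a*b*c*d + 25*z^3*W^4*Zi*Ui*(K:ℂ)*a*b*c*d + 5*z^3*W^4*Zi*Ui*(K:ℂ)^2*a*b*c*d - 4*z^4*W^3*Zi*Ui*a*b*c*d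 - 2*z^4*W^3*Zi*Ui*(K:ℂ)*a*b*c*d - 6*z^4*W^4*Zi*Ui*a*b*c*d - 5*z^4*W^4*Zi*Ui*(K:ℂ)*a*b*c*d - z^4*W^4*Zi*Ui*(K:ℂ)^2*a*b*c*d) * hZrel + (-2*W^4*Zi^2*a*b*c*d - 3*W^4*Zi^2*(K:ℂ)*a*b*c*d - W^4*Zi^2*(K:ℂ)^2*a*b*c*d + 4*z*W^4*Zi^2*(K:ℂ)*a*b*c*d + 2*z*W^4*Zi^2*(K:ℂ)^2*a*b*c*d + 6*z^2*W^4*Zi^2*a*b*c*d + z^2*W^4*Zi^2*(K:ℂ)*a*b*c*d - z^2*W^4*Zi^2*(K:ℂ)^2*a*b*c*d - 4*z^3*W^4*Zi^2*a*b*c*d - 2*z^3*W^4*Zi^2*(K:ℂ)*a*b*c*d - 4*u*W^4*Zi^2*a*b*c*d - 2*u*W^4*Zi^2*(K:ℂ)*a*b*c*d + 8*u*z*W^4*Zi^2*a*b*c*d + 4*u*z*W^4*Zi^2*(K:ℂ)*a*b*c*d - 4*u*z^2*W^4*Zi^2*a*b*c*d - 2*u*z^2*W^4*Zi^2*(K:ℂ)*a*b*c*d)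 * hUrel

/-! ### Continuity lemmas -/

lemma contOn_Gf_z (N : ℕ) (v : ℂ) :
    ContinuousOn (fun z => Gf N v z) {z : ℂ | z ≠ 0 ∧ v + z - 1 ≠ 0} := by
  unfold Gf
  exact (((continuousOn_const.add (ContinuousOn.inv₀ (by fun_prop) fun z hz => hz.2)).pow N).mul
    ((continuousOn_const.sub (ContinuousOn.inv₀ (by fun_prop) fun z hz => hz.1)).pow N))

lemma contOn_Gu_z (N : ℕ) (v : ℂ) :
    ContinuousOn (fun z => Gu N v z) {z : ℂ | z ≠ 0 ∧ v + z - 1 ≠ 0} := by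
  unfold Gu
  exact ((continuousOn_const.mul ((continuousOn_const.add
      (ContinuousOn.inv₀ (by fun_prop) fun z hz => hz.2)).pow (N-1))).mul
    ((ContinuousOn.inv₀ (by fun_prop) fun z hz => hz.2).pow 2)).mul
    ((continuousOn_const.sub (ContinuousOn.inv₀ (by fun_prop) fun z hz => hz.1)).pow N)

lemma contOn_Guu_z (N : ℕ) (v : ℂ) :
    ContinuousOn (fun z => Guu N v z) {z : ℂ | z ≠ 0 ∧ v + z - 1 ≠ 0} := by
  unfold Guu
  exact (((continuousOn_const.mul ((continuousOn_const.add
      (ContinuousOn.inv₀ (by fun_prop) fun z hz => hz.2)).pow (N-2))).mul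
    ((ContinuousOn.inv₀ (by fun_prop) fun z hz => hz.2).pow 4)).mul
    ((continuousOn_const.sub (ContinuousOn.inv₀ (by fun_prop) fun z hz => hz.1)).pow N)).add
    ((((continuousOn_const.mul ((continuousOn_const.add
      (ContinuousOn.inv₀ (by fun_prop) fun z hz => hz.2)).pow (N-1))).mul
    ((ContinuousOn.inv₀ (by fun_prop) fun z hz => hz.2).pow 3)).mul
    ((continuousOn_const.sub (ContinuousOn.inv₀ (by fun_prop) fun z hz => hz.1)).pow N)))

lemma contOn_Gf_p (N : ℕ) :
    ContinuousOn (fun p : ℂ × ℂ => Gf N p.1 p.2)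
      {p : ℂ × ℂ | p.2 ≠ 0 ∧ p.1 + p.2 - 1 ≠ 0} := by
  unfold Gf
  exact (((continuousOn_const.add (ContinuousOn.inv₀ (by fun_prop) fun p hp => hp.2)).pow N).mul
    ((continuousOn_const.sub (ContinuousOn.inv₀ (by fun_prop) fun p hp => hp.1)).pow N))

lemma contOn_Gu_p (N : ℕ) :
    ContinuousOn (fun p : ℂ × ℂ => Gu N p.1 p.2)
      {p : ℂ × ℂ | p.2 ≠ 0 ∧ p.1 + p.2 - 1 ≠ 0} := by
  unfold Gu
  exact ((continuousOn_const.mul ((continuousOn_const.add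
      (ContinuousOn.inv₀ (by fun_prop) fun p hp => hp.2)).pow (N-1))).mul
    ((ContinuousOn.inv₀ (by fun_prop) fun p hp => hp.2).pow 2)).mul
    ((continuousOn_const.sub (ContinuousOn.inv₀ (by fun_prop) fun p hp => hp.1)).pow N)

lemma contOn_Guu_p (N : ℕ) :
    ContinuousOn (fun p : ℂ × ℂ => Guu N p.1 p.2)
      {p : ℂ × ℂ | p.2 ≠ 0 ∧ p.1 + p.2 - 1 ≠ 0} := by
  unfold Guu
  exact (((continuousOn_const.mul ((continuousOn_const.add
      (ContinuousOn.inv₀ (by fun_prop) fun p hp => hp.2)).pow (N-2))).mul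
    ((ContinuousOn.inv₀ (by fun_prop) fun p hp => hp.2).pow 4)).mul
    ((continuousOn_const.sub (ContinuousOn.inv₀ (by fun_prop) fun p hp => hp.1)).pow N)).add
    ((((continuousOn_const.mul ((continuousOn_const.add
      (ContinuousOn.inv₀ (by fun_prop) fun p hp => hp.2)).pow (N-1))).mul
    ((ContinuousOn.inv₀ (by fun_prop) fun p hp => hp.2).pow 3)).mul
    ((continuousOn_const.sub (ContinuousOn.inv₀ (by fun_prop) fun p hp => hp.1)).pow N)))

lemma diffAt_Gf (N : ℕ) (v : ℂ) {z : ℂ} (hz : z ≠ 0) (hw : v + z - 1 ≠ 0) :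
    DifferentiableAt ℂ (fun z => Gf N v z) z := by
  unfold Gf
  exact ((((((differentiableAt_id.const_add v).sub_const 1).inv hw).const_add 1).pow N).mul
    (((differentiableAt_id.inv hz).const_sub 1).pow N))

lemma circleIntegral_add {f g : ℂ → ℂ} {c : ℂ} {R : ℝ} (hf : CircleIntegrable f c R)
    (hg : CircleIntegrable g c R) :
    (∮ z in C(c, R), (f z + g z)) = (∮ z in C(c, R), f z) + ∮ z in C(c, R), g z := by
  simp only [circleIntegral, smul_add, intervalIntegral.integral_add hf.out hg.out]

/-! ### Radius independence -/

lemma radius_eq (N : ℕ) {v : ℂ} {a b : ℝ} (ha : 0 < a) (hab : a ≤ b)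
    (hb : b < ‖1 - v‖) :
    (∮ z in C(0, b), Gf N v z) = ∮ z in C(0, a), Gf N v z := by
  apply Complex.circleIntegral_eq_of_differentiable_on_annulus_off_countable ha hab
    Set.countable_empty
  · intro z hz
    have hza : a ≤ ‖z‖ := by
      have h := hz.2; rw [mem_ball, dist_zero_right] at h; linarith [not_lt.mp h]
    have hzb : ‖z‖ ≤ b := by
      have h := hz.1; rwa [mem_closedBall, dist_zero_right] at h
    have h1 : z ≠ 0 := by intro h; rw [h] at hza; simp at hza; linarith
    have h2 : v + z - 1 ≠ 0 := by
      intro h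
      have hzv : z = 1 - v := by linear_combination h
      rw [hzv] at hzb; linarith
    exact ((diffAt_Gf N v h1 h2).continuousAt).continuousWithinAt
  · intro z hz
    have hza : a < ‖z‖ := by
      have h := hz.1.2; rw [mem_closedBall, dist_zero_right] at h
      linarith [not_le.mp h]
    have hzb : ‖z‖ < b := by
      have h := hz.1.1; rwa [mem_ball, dist_zero_right] at h
    have h1 : z ≠ 0 := by intro h; rw [h] at hza; simp at hza; linarith
    have h2 : v + z - 1 ≠ 0 := by
      intro h
      have hzv : z = 1 - v := by linear_combination h
      rw [hzv] at hzb; linarith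
    exact diffAt_Gf N v h1 h2

lemma f_eq (N : ℕ) {u v : ℂ} (hu1 : u ≠ 1) (hv : v ∈ ball u (‖1 - u‖ / 6)) :
    f N N v = (2 * Real.pi * Complex.I)⁻¹ * ∮ z in C(0, ‖1 - u‖ / 2), Gf N v z := by
  have h1u : (0:ℝ) < ‖1 - u‖ := by
    rw [norm_pos_iff]
    exact sub_ne_zero.mpr fun h => hu1 h.symm
  have hvu : ‖v - u‖ < ‖1 - u‖ / 6 := by
    rw [mem_ball, Complex.dist_eq] at hv; exact hv
  have hlow : 5 * (‖1 - u‖ / 6) < ‖1 - v‖ := by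
    have h2 := norm_sub_norm_le (1 - u) (v - u)
    rw [show (1 - u) - (v - u) = 1 - v by ring] at h2
    linarith
  unfold f Gf
  congr 1
  rcases le_total (‖1 - v‖ / 2) (‖1 - u‖ / 2) with h | h
  · have := radius_eq N (v := v) (a := ‖1 - v‖ / 2) (b := ‖1 - u‖ / 2)
      (by linarith) h (by linarith)
    unfold Gf at this
    exact this.symm
  · have := radius_eq N (v := v) (a := ‖1 - u‖ / 2) (b := ‖1 - v‖ / 2)
      (by linarith) h (by linarith)
    unfold Gf at this
    exact this

/-! ### Differentiation under the integral sign -/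

lemma hasDerivAt_circleInt {F F' : ℂ → ℂ → ℂ} {v₀ : ℂ} {ε r : ℝ} (hε : 0 < ε) (hr : 0 < r)
    (hF : ContinuousOn (fun p : ℂ × ℂ => F p.1 p.2) (closedBall v₀ ε ×ˢ sphere 0 r))
    (hF' : ContinuousOn (fun p : ℂ × ℂ => F' p.1 p.2) (closedBall v₀ ε ×ˢ sphere 0 r))
    (hd : ∀ x ∈ closedBall v₀ ε, ∀ z ∈ sphere (0:ℂ) r, HasDerivAt (fun x => F x z) (F' x z) x) :
    HasDerivAt (fun x => ∮ z in C(0, r), F x z) (∮ z in C(0, r), F' v₀ z) v₀ := by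
  have hsph : ∀ θ : ℝ, circleMap 0 r θ ∈ sphere (0:ℂ) r := circleMap_mem_sphere 0 hr.le
  obtain ⟨C, hC⟩ := ((isCompact_closedBall v₀ ε).prod
    (isCompact_sphere (0:ℂ) r)).exists_bound_of_continuousOn hF'
  have hcont : ∀ x ∈ closedBall v₀ ε, Continuous fun θ : ℝ => F x (circleMap 0 r θ) := by
    intro x hx
    have := hF.comp_continuous (continuous_const.prodMk (continuous_circleMap 0 r))
      (fun θ => Set.mk_mem_prod hx (hsph θ))
    exact this
  have hcont' : ∀ x ∈ closedBall v₀ ε, Continuous fun θ : ℝ => F' x (circleMap 0 r θ) := by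
    intro x hx
    have := hF'.comp_continuous (continuous_const.prodMk (continuous_circleMap 0 r))
      (fun θ => Set.mk_mem_prod hx (hsph θ))
    exact this
  unfold circleIntegral
  simp only [deriv_circleMap]
  have hmain := intervalIntegral.hasDerivAt_integral_of_dominated_loc_of_deriv_le
    (F := fun x θ => (circleMap 0 r θ * I) • F x (circleMap 0 r θ))
    (F' := fun x θ => (circleMap 0 r θ * I) • F' x (circleMap 0 r θ))
    (x₀ := v₀) (a := 0) (b := 2 * Real.pi) (μ := volume)
    (bound := fun _ => r * C) (s := ball v₀ ε) (ball_mem_nhds v₀ hε) ?_ ?_ ?_ ?_ ?_ ?_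
  · exact hmain.2
  · filter_upwards [closedBall_mem_nhds v₀ hε] with x hx
    exact (((continuous_circleMap 0 r).mul continuous_const).smul (hcont x hx)).aestronglyMeasurable
  · exact (((continuous_circleMap 0 r).mul continuous_const).smul
      (hcont v₀ (mem_closedBall_self hε.le))).intervalIntegrable 0 (2 * Real.pi)
  · exact (((continuous_circleMap 0 r).mul continuous_const).smul
      (hcont' v₀ (mem_closedBall_self hε.le))).aestronglyMeasurable
  · apply Eventually.of_forall
    intro θ _ x hx
    have hb := hC (x, circleMap 0 r θ)
      (Set.mk_mem_prod (ball_subset_closedBall hx) (hsph θ))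
    have : ‖(circleMap 0 r θ * I) • F' x (circleMap 0 r θ)‖
        = r * ‖F' x (circleMap 0 r θ)‖ := by
      rw [norm_smul, norm_mul, norm_circleMap_zero,
        Complex.norm_I, abs_of_pos hr, mul_one]
    rw [this]
    exact mul_le_mul_of_nonneg_left hb hr.le
  · exact intervalIntegrable_const
  · apply Eventually.of_forall
    intro θ _ x hx
    exact (hd x (ball_subset_closedBall hx) _ (hsph θ)).const_smul (circleMap 0 r θ * I)

/-- Lemma (Do–Norbury): `f''_{N,N} + (4N/(u²−1)) f'_{N,N} − (2N/(u(u²−1))) f_{N,N} = 0`. -/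
theorem stmt9 (N : ℕ) (hN : 1 ≤ N) (u : ℂ) (hu0 : u ≠ 0) (hu1 : u ≠ 1)
    (hum1 : u ≠ -1) :
    iteratedDeriv 2 (f N N) u
      + (4 * (N : ℂ) / (u ^ 2 - 1)) * deriv (f N N) u
      - (2 * (N : ℂ) / (u * (u ^ 2 - 1))) * f N N u = 0 := by
  have h1u : (0:ℝ) < ‖1 - u‖ := by
    rw [norm_pos_iff]
    exact sub_ne_zero.mpr fun h => hu1 h.symm
  set ε : ℝ := ‖1 - u‖ / 6 with hεdef
  set r : ℝ := ‖1 - u‖ / 2 with hrdef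
  have hεpos : 0 < ε := by rw [hεdef]; linarith
  have hrpos : 0 < r := by rw [hrdef]; linarith
  have hmem : ∀ x ∈ ball u ε, ∀ z ∈ sphere (0:ℂ) r, z ≠ 0 ∧ x + z - 1 ≠ 0 := by
    intro x hx z hzs
    have hzabs : ‖z‖ = r := by
      rwa [mem_sphere, dist_zero_right] at hzs
    constructor
    · intro h; rw [h] at hzabs; simp at hzabs; rw [hrdef] at hzabs; linarith
    · intro h
      have hzx : z = 1 - x := by linear_combination h
      have hd : ‖x - u‖ < ε := by rwa [mem_ball, Complex.dist_eq] at hx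
      have hge : ‖1 - u‖ - ‖x - u‖ ≤ ‖1 - x‖ := by
        have h2 := norm_sub_norm_le (1 - u) (x - u)
        rw [show (1 - u) - (x - u) = 1 - x by ring] at h2
        simpa only using h2
      rw [hzx] at hzabs
      rw [hεdef] at hd; rw [hrdef] at hzabs; linarith
  have hsphsub : ∀ z ∈ sphere (0:ℂ) r, z ≠ 0 ∧ u + z - 1 ≠ 0 :=
    fun z hz => hmem u (mem_ball_self hεpos) z hz
  set φ : ℂ → ℂ := fun v => (2 * Real.pi * Complex.I)⁻¹ * ∮ z in C(0, r), Gf N v z with hφdef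
  set ψ : ℂ → ℂ := fun v => (2 * Real.pi * Complex.I)⁻¹ * ∮ z in C(0, r), Gu N v z with hψdef
  set χ : ℂ → ℂ := fun v => (2 * Real.pi * Complex.I)⁻¹ * ∮ z in C(0, r), Guu N v z with hχdef
  have hfφ : ∀ v ∈ ball u ε, f N N v = φ v := fun v hv => f_eq N hu1 hv
  -- derivative of φ is ψ, derivative of ψ is χ, on the ball
  have hsub2 : ∀ v ∈ ball u ε, ∀ x ∈ closedBall v ((ε - dist v u)/2), x ∈ ball u ε := by
    intro v hv x hx
    rw [mem_ball]
    have h1 : dist x v ≤ (ε - dist v u)/2 := mem_closedBall.mp hx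
    have h2 : dist v u < ε := mem_ball.mp hv
    calc dist x u ≤ dist x v + dist v u := dist_triangle x v u
      _ < ε := by linarith
  have hprodsub : ∀ v ∈ ball u ε,
      (closedBall v ((ε - dist v u)/2) ×ˢ sphere (0:ℂ) r) ⊆
        {p : ℂ × ℂ | p.2 ≠ 0 ∧ p.1 + p.2 - 1 ≠ 0} := by
    intro v hv p hp
    exact hmem p.1 (hsub2 v hv p.1 hp.1) p.2 hp.2
  have hφψ : ∀ v ∈ ball u ε, HasDerivAt φ (ψ v) v := by
    intro v hv
    have hδ : 0 < (ε - dist v u)/2 := by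
      have := mem_ball.mp hv; linarith
    have key := hasDerivAt_circleInt (F := Gf N) (F' := Gu N) hδ hrpos
      ((contOn_Gf_p N).mono (hprodsub v hv)) ((contOn_Gu_p N).mono (hprodsub v hv))
      (fun x hx z hz => hasDerivAt_Gf N z (hmem x (hsub2 v hv x hx) z hz).2)
    exact key.const_mul ((2 * Real.pi * Complex.I)⁻¹)
  have hψχ : ∀ v ∈ ball u ε, HasDerivAt ψ (χ v) v := by
    intro v hv
    have hδ : 0 < (ε - dist v u)/2 := by
      have := mem_ball.mp hv; linarith
    have key := hasDerivAt_circleInt (F := Gu N) (F' := Guu N) hδ hrpos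
      ((contOn_Gu_p N).mono (hprodsub v hv)) ((contOn_Guu_p N).mono (hprodsub v hv))
      (fun x hx z hz => hasDerivAt_Gu N hN z (hmem x (hsub2 v hv x hx) z hz).2)
    exact key.const_mul ((2 * Real.pi * Complex.I)⁻¹)
  have hfeq : f N N =ᶠ[𝓝 u] φ := by
    filter_upwards [ball_mem_nhds u hεpos] with v hv using hfφ v hv
  have hderiv1 : deriv (f N N) =ᶠ[𝓝 u] ψ := by
    filter_upwards [isOpen_ball.mem_nhds (mem_ball_self hεpos)] with v hv
    have hloc : f N N =ᶠ[𝓝 v] φ := by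
      filter_upwards [isOpen_ball.mem_nhds hv] with x hx using hfφ x hx
    rw [hloc.deriv_eq]
    exact (hφψ v hv).deriv
  have h2 : iteratedDeriv 2 (f N N) u = χ u := by
    rw [show (2:ℕ) = 1 + 1 from rfl, iteratedDeriv_succ, iteratedDeriv_one]
    rw [hderiv1.deriv_eq]
    exact (hψχ u (mem_ball_self hεpos)).deriv
  have h1 : deriv (f N N) u = ψ u := by
    rw [hfeq.deriv_eq]
    exact (hφψ u (mem_ball_self hεpos)).deriv
  have h0 : f N N u = φ u := hfφ u (mem_ball_self hεpos)
  rw [h2, h1, h0]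
  -- integrability
  have hciGf : CircleIntegrable (fun z => Gf N u z) 0 r :=
    ContinuousOn.circleIntegrable hrpos.le ((contOn_Gf_z N u).mono hsphsub)
  have hciGu : CircleIntegrable (fun z => (4 * (N:ℂ) / (u ^ 2 - 1)) * Gu N u z) 0 r :=
    ContinuousOn.circleIntegrable hrpos.le
      (continuousOn_const.mul ((contOn_Gu_z N u).mono hsphsub))
  have hciGf' : CircleIntegrable (fun z => (2 * (N:ℂ) / (u * (u ^ 2 - 1))) * Gf N u z) 0 r :=
    ContinuousOn.circleIntegrable hrpos.le
      (continuousOn_const.mul ((contOn_Gf_z N u).mono hsphsub))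
  have hciGuu : CircleIntegrable (fun z => Guu N u z) 0 r :=
    ContinuousOn.circleIntegrable hrpos.le ((contOn_Guu_z N u).mono hsphsub)
  have hint : (∮ z in C(0, r), (Guu N u z + (4 * (N:ℂ) / (u ^ 2 - 1)) * Gu N u z
      - (2 * (N:ℂ) / (u * (u ^ 2 - 1))) * Gf N u z)) = 0 := by
    apply circleIntegral.integral_eq_zero_of_hasDerivWithinAt (f := fun z => Hc N u z) hrpos.le
    intro z hzs
    obtain ⟨hz0, hzw⟩ := hsphsub z hzs
    exact (hasDerivAt_Hc N hN hu0 hu1 hum1 hz0 hzw).hasDerivWithinAt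
  have hciSum : CircleIntegrable
      (fun z => Guu N u z + 4 * (N:ℂ) / (u ^ 2 - 1) * Gu N u z) 0 r :=
    ContinuousOn.circleIntegrable hrpos.le (((contOn_Guu_z N u).mono hsphsub).add
      (continuousOn_const.mul ((contOn_Gu_z N u).mono hsphsub)))
  rw [circleIntegral.integral_sub hciSum hciGf',
    circleIntegral_add hciGuu hciGu,
    circleIntegral.integral_const_mul, circleIntegral.integral_const_mul] at hint
  have hφu : φ u = (2 * Real.pi * Complex.I)⁻¹ * ∮ z in C(0, r), Gf N u z := rfl
  have hψu : ψ u = (2 * Real.pi * Complex.I)⁻¹ * ∮ z in C(0, r), Gu N u z := rfl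
  have hχu : χ u = (2 * Real.pi * Complex.I)⁻¹ * ∮ z in C(0, r), Guu N u z := rfl
  rw [hφu, hψu, hχu]
  linear_combination (2 * Real.pi * Complex.I)⁻¹ * hint
end

section
/- Let N ≥ 0 and k ≥ 0 be integers and let u be a complex number with u ∉ {0, 1}. Then (1/u)·(1/(2πi)) ∮_{|z|=r} ((1−z)^{N+k}/(z+u−1)^{N+k})·((z+u)^N/z^N) dz = (−1)^{N+k−1}·f_{N+k,N}(1/u), where the contour on the left is the circle of radius r centered at 0 traversed counterclockwise with 0 < r < |1−u|. -/
open Complex Metric Set intervalIntegral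

/-- Rotation/scaling change of variables in a circle integral. -/
lemma circleIntegral_comp_mul (a : ℂ) (r : ℝ) (g : ℂ → ℂ) :
    (∮ z in C(0, ‖a‖ * r), g z) = a * ∮ z in C(0, r), g (a * z) := by
  set s : ℝ := ‖a‖ * r with hs
  set F : ℝ → ℂ := fun θ => deriv (circleMap 0 s) θ • g (circleMap 0 s θ) with hF
  have key : ∀ θ : ℝ, circleMap 0 s (θ + a.arg) = a * circleMap 0 r θ := by
    intro θ
    rw [circleMap_zero, circleMap_zero]
    conv_rhs => rw [← Complex.norm_mul_exp_arg_mul_I a]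
    push_cast
    rw [add_mul, Complex.exp_add, Complex.ofReal_mul]
    ring
  have hper : Function.Periodic F (2 * Real.pi) := by
    intro θ
    simp [hF, deriv_circleMap, (periodic_circleMap 0 s) θ]
  have hFeq : ∀ θ : ℝ, F (θ + a.arg) = a * (deriv (circleMap 0 r) θ • g (a * circleMap 0 r θ)) := by
    intro θ
    simp only [hF, deriv_circleMap, key θ, smul_eq_mul]
    ring
  calc (∮ z in C(0, s), g z) = ∫ θ in (0:ℝ)..2*Real.pi, F θ := rfl
    _ = ∫ θ in a.arg..(a.arg + 2*Real.pi), F θ := by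
          rw [hper.intervalIntegral_add_eq a.arg 0, zero_add]
    _ = ∫ θ in (0:ℝ)..2*Real.pi, F (θ + a.arg) := by
          rw [intervalIntegral.integral_comp_add_right F a.arg, zero_add, add_comm a.arg]
    _ = ∫ θ in (0:ℝ)..2*Real.pi, a * (deriv (circleMap 0 r) θ • g (a * circleMap 0 r θ)) := by
          simp only [hFeq]
    _ = a * ∮ z in C(0, r), g (a * z) := by
          rw [intervalIntegral.integral_const_mul]; rfl

lemma Gdiff (A B : ℕ) (u : ℂ) {z : ℂ} (h0 : z ≠ 0) (h1 : z + u - 1 ≠ 0) :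
    DifferentiableAt ℂ (fun z : ℂ => (1 - z) ^ A / (z + u - 1) ^ A * ((z + u) ^ B / z ^ B)) z := by
  apply DifferentiableAt.mul
  · exact DifferentiableAt.div (by fun_prop) (by fun_prop) (pow_ne_zero _ h1)
  · exact DifferentiableAt.div (by fun_prop) (by fun_prop) (pow_ne_zero _ h0)

lemma annulus_cond (u : ℂ) {r₁ r₂ : ℝ} (h₁ : 0 < r₁) (h₂' : r₂ < ‖1 - u‖)
    {z : ℂ} (hz : z ∈ closedBall (0:ℂ) r₂ \ ball (0:ℂ) r₁) : z ≠ 0 ∧ z + u - 1 ≠ 0 := by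
  obtain ⟨hz2, hz1⟩ := hz
  rw [mem_closedBall, dist_zero_right] at hz2
  rw [mem_ball, dist_zero_right, not_lt] at hz1
  constructor
  · intro h; rw [h] at hz1; simp at hz1; linarith
  · intro h
    have hz0 : z = 1 - u := by linear_combination h
    rw [hz0] at hz2
    linarith

lemma radius_indep (A B : ℕ) (u : ℂ) {r₁ r₂ : ℝ} (h₁ : 0 < r₁) (h₂ : 0 < r₂)
    (h₁' : r₁ < ‖1 - u‖) (h₂' : r₂ < ‖1 - u‖) :
    (∮ z in C(0, r₁), (1 - z) ^ A / (z + u - 1) ^ A * ((z + u) ^ B / z ^ B)) =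
    ∮ z in C(0, r₂), (1 - z) ^ A / (z + u - 1) ^ A * ((z + u) ^ B / z ^ B) := by
  have main : ∀ {s t : ℝ}, 0 < s → s ≤ t → t < ‖1 - u‖ →
      (∮ z in C(0, t), (1 - z) ^ A / (z + u - 1) ^ A * ((z + u) ^ B / z ^ B)) =
      ∮ z in C(0, s), (1 - z) ^ A / (z + u - 1) ^ A * ((z + u) ^ B / z ^ B) := by
    intro s t hs hst ht
    refine circleIntegral_eq_of_differentiable_on_annulus_off_countable hs hst
      Set.countable_empty ?_ ?_
    · intro z hz
      obtain ⟨hz0, hz1⟩ := annulus_cond u hs ht hz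
      exact (Gdiff A B u hz0 hz1).continuousAt.continuousWithinAt
    · intro z hz
      obtain ⟨hz0, hz1⟩ := annulus_cond u hs ht
        ⟨ball_subset_closedBall hz.1.1, fun hb => hz.1.2 (ball_subset_closedBall hb)⟩
      exact Gdiff A B u hz0 hz1
  rcases le_total r₁ r₂ with h | h
  · exact (main h₁ h h₂').symm
  · exact main h₂ h h₁'

lemma pointwise (A B : ℕ) (u z : ℂ) (hu0 : u ≠ 0) (hz0 : z ≠ 0) (hd : 1/u + z - 1 ≠ 0) :
    (1 + (1/u + z - 1)⁻¹) ^ A * (1 - z⁻¹) ^ B =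
    (-1:ℂ) ^ A * ((1 - (-u*z)) ^ A / ((-u*z) + u - 1) ^ A * (((-u*z) + u) ^ B / (-u*z) ^ B)) := by
  have hw : (-u*z) + u - 1 ≠ 0 := by
    intro h
    apply hd
    field_simp
    linear_combination -h
  have h3 : (1 : ℂ) - u + u*z ≠ 0 := fun h => hw (by linear_combination -h)
  have hwz : (-u*z) ≠ 0 := by simp [hu0, hz0]
  have e1 : 1 + (1/u + z - 1)⁻¹ = -((1 - (-u*z)) / ((-u*z) + u - 1)) := by
    have hd' : 1/u + z - 1 = (1 - u + u*z) / u := by field_simp; ring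
    have hneg : -(-u*z + u - 1) = 1 - u + u*z := by ring
    rw [hd', inv_div, ← div_neg, hneg, eq_div_iff h3, add_mul, div_mul_cancel₀ _ h3]
    ring
  have e2 : (1:ℂ) - z⁻¹ = ((-u*z) + u) / (-u*z) := by
    field_simp
    ring
  rw [e1, e2, neg_pow, div_pow, div_pow]
  ring

/-- The transformation (\ref{T-1}):
`(1/u)(1/(2πi)) ∮ ((1−z)^{N+k}/(z+u−1)^{N+k})((z+u)^N/z^N) dz
  = (−1)^{N+k−1} f_{N+k,N}(1/u)`. -/
theorem stmt12 (N k : ℕ) (u : ℂ) (hu0 : u ≠ 0) (hu1 : u ≠ 1)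
    (r : ℝ) (hr : 0 < r) (hr' : r < ‖1 - u‖) :
    (1 / u) * ((2 * Real.pi * Complex.I)⁻¹ *
      (∮ z in C(0, r),
        ((1 - z) ^ (N + k) / (z + u - 1) ^ (N + k)) *
          ((z + u) ^ N / z ^ N))) =
    (-1 : ℂ) ^ ((N : ℤ) + (k : ℤ) - 1) * f (N + k) N (1 / u) := by
  set A := N + k with hA
  have h1u : (1:ℂ) - u ≠ 0 := sub_ne_zero.mpr (Ne.symm hu1)
  have habs : 0 < ‖1 - u‖ := norm_pos_iff.mpr h1u
  have hinv1 : (1:ℂ) - 1/u ≠ 0 := by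
    intro h
    apply hu1
    have : (1:ℂ) = 1/u := by linear_combination h
    field_simp at this
    exact this
  set r' : ℝ := ‖1 - 1/u‖ / 2 with hr'def
  set R' : ℝ := ‖1 - u‖ / 2 with hR'def
  have hr'pos : 0 < r' := by
    have := norm_pos_iff.mpr hinv1
    rw [hr'def]; linarith
  have hRpos : 0 < R' := by rw [hR'def]; linarith
  have hRlt : R' < ‖1 - u‖ := by rw [hR'def]; linarith
  have hmul : (-u) * (1 - 1/u) = 1 - u := by field_simp; ring
  have hradabs : ‖-u‖ * r' = R' := by
    rw [hr'def, hR'def, ← hmul, norm_mul]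
    ring
  set T : ℂ := ∮ z in C(0, r'),
    (1 - (-u*z)) ^ A / ((-u*z) + u - 1) ^ A * (((-u*z) + u) ^ N / (-u*z) ^ N) with hT
  have hS : (∮ z in C(0, R'),
      (1 - z) ^ A / (z + u - 1) ^ A * ((z + u) ^ N / z ^ N)) = (-u) * T := by
    rw [← hradabs]
    exact circleIntegral_comp_mul (-u) r' _
  have hrad : (∮ z in C(0, r), (1 - z) ^ A / (z + u - 1) ^ A * ((z + u) ^ N / z ^ N)) =
      ∮ z in C(0, R'), (1 - z) ^ A / (z + u - 1) ^ A * ((z + u) ^ N / z ^ N) :=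
    radius_indep A N u hr hRpos hr' hRlt
  have hcongr : (∮ z in C(0, r'), (1 + (1/u + z - 1)⁻¹) ^ A * (1 - z⁻¹) ^ N) =
      ∮ z in C(0, r'), (-1:ℂ) ^ A *
        ((1 - (-u*z)) ^ A / ((-u*z) + u - 1) ^ A * (((-u*z) + u) ^ N / (-u*z) ^ N)) := by
    refine circleIntegral.integral_congr hr'pos.le fun z hz => ?_
    rw [mem_sphere_iff_norm, sub_zero] at hz
    have hz0 : z ≠ 0 := by
      intro h; rw [h, norm_zero] at hz; linarith
    have hd : 1/u + z - 1 ≠ 0 := by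
      intro h
      have hz1 : z = 1 - 1/u := by linear_combination h
      rw [hz1] at hz
      rw [hr'def] at hz
      have := norm_pos_iff.mpr hinv1
      linarith
    exact pointwise A N u z hu0 hz0 hd
  have hsign : ((-1:ℂ)) ^ ((N:ℤ) + (k:ℤ) - 1) * (-1:ℂ) ^ A = -1 := by
    rw [hA, ← zpow_natCast (-1:ℂ) (N+k), ← zpow_add₀ (by norm_num : (-1:ℂ) ≠ 0)]
    have he : (N:ℤ) + k - 1 + ((N+k : ℕ) : ℤ) = 2*((N:ℤ)+k) - 1 := by push_cast; ring
    rw [he]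
    exact Odd.neg_one_zpow ⟨(N:ℤ)+k-1, by ring⟩
  have hu' : (1/u) * (-u) = -1 := by field_simp
  rw [f]
  have hrw : ‖1 - 1/u‖ / 2 = r' := rfl
  rw [hrw, hcongr, circleIntegral.integral_const_mul, ← hT, hrad, hS]
  set P : ℂ := (2 * Real.pi * Complex.I)⁻¹ with hP
  calc (1/u) * (P * ((-u) * T)) = ((1/u) * (-u)) * (P * T) := by ring
    _ = -1 * (P * T) := by rw [hu']
    _ = (((-1:ℂ)) ^ ((N:ℤ) + (k:ℤ) - 1) * (-1:ℂ) ^ A) * (P * T) := by rw [hsign]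
    _ = ((-1:ℂ)) ^ ((N:ℤ) + (k:ℤ) - 1) * (P * ((-1:ℂ) ^ A * T)) := by ring
end
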